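/- Let Γ be a discrete group, G a Γ-graded Hausdorff ample groupoid (with continuous cocycle c:G→Γ) such that G_ε = c⁻¹(ε) is strongly effective, and k a field. Then the correspondence U ↦ I(U) := span_k{1_B : B a compact open bisection with d(B) ⊆ U} is a lattice isomorphism from the lattice of open invariant subsets of G⁰ onto the lattice of graded two-sided ideals of A_k(G). -/

import Mathlib

set_option linter.unusedSectionVars false
set_option maxHeartbeats 1000000


open Set Function

/-- A groupoid structure on a type `G`: a small category in which every morphism is
invertible, encoded with a total multiplication `mul` that is only meaningful on
composable pairs.  Here `d x = x⁻¹x` and `r x = xx⁻¹`, and a pair `(x, y)` is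
composable exactly when `d x = r y`. -/
structure GroupoidStr (G : Type*) where
  mul : G → G → G
  inv : G → G
  inv_inv : ∀ x, inv (inv x) = x
  /-- `x · d x = x` -/
  mul_d : ∀ x, mul x (mul (inv x) x) = x
  /-- `r x · x = x` -/
  r_mul : ∀ x, mul (mul x (inv x)) x = x
  /-- associativity on composable pairs -/
  assoc : ∀ x y z, mul (inv x) x = mul y (inv y) → mul (inv y) y = mul z (inv z) →
    mul (mul x y) z = mul x (mul y z)
  /-- `d (xy) = d y` for composable `x, y` -/
  d_comp : ∀ x y, mul (inv x) x = mul y (inv y) →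
    mul (inv (mul x y)) (mul x y) = mul (inv y) y
  /-- `r (xy) = r x` for composable `x, y` -/
  r_comp : ∀ x y, mul (inv x) x = mul y (inv y) →
    mul (mul x y) (inv (mul x y)) = mul x (inv x)
  /-- `(xy)⁻¹ = y⁻¹x⁻¹` for composable `x, y` -/
  inv_mul : ∀ x y, mul (inv x) x = mul y (inv y) → inv (mul x y) = mul (inv y) (inv x)
  /-- units are their own inverses -/
  unit_self_inv : ∀ x, inv (mul (inv x) x) = mul (inv x) x
  /-- units are idempotents -/
  unit_idem : ∀ x, mul (mul (inv x) x) (mul (inv x) x) = mul (inv x) x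

namespace GroupoidStr

variable {G : Type*} (S : GroupoidStr G)

/-- The domain (source) `d x = x⁻¹ x` of `x`. -/
def d (x : G) : G := S.mul (S.inv x) x

/-- The range `r x = x x⁻¹` of `x`. -/
def r (x : G) : G := S.mul x (S.inv x)

/-- The unit space `G⁰ = d(G) = r(G)`. -/
def unitSpace : Set G := Set.range S.d

/-- The isotropy bundle `Iso(G) = {x | d x = r x}`. -/
def IsoSet : Set G := {x | S.d x = S.r x}

/-- The orbit of a unit `u`: `{r γ : d γ = u}`. -/
def orbit (u : G) : Set G := S.r '' {γ : G | S.d γ = u}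

/-- A subset `U` of the unit space is invariant if `d γ ∈ U` implies `r γ ∈ U`. -/
def IsInvariant (U : Set G) : Prop := ∀ γ : G, S.d γ ∈ U → S.r γ ∈ U

section Top

variable [TopologicalSpace G]

/-- `G` is a topological groupoid: inversion and composition (on the set of composable
pairs, with the relative product topology) are continuous. -/
def IsTopological : Prop :=
  Continuous S.inv ∧
    Continuous fun p : {p : G × G // S.d p.1 = S.r p.2} => S.mul p.1.1 p.1.2

/-- An open bisection: an open set on which both `d` and `r` restrict to homeomorphisms
onto open subsets of the unit space. -/
def IsOpenBisection (U : Set G) : Prop :=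
  IsOpen U ∧ Set.InjOn S.d U ∧ Set.InjOn S.r U ∧
    (∀ V ⊆ U, IsOpen V → IsOpen (S.d '' V)) ∧ (∀ V ⊆ U, IsOpen V → IsOpen (S.r '' V))

/-- An étale groupoid: there is a basis of open bisections (equivalently, `d` is a local
homeomorphism). -/
def IsEtale : Prop := ∀ x : G, ∃ U, x ∈ U ∧ S.IsOpenBisection U

/-- An ample groupoid: there is a basis of compact open bisections. -/
def IsAmple : Prop :=
  ∀ (x : G) (W : Set G), x ∈ W → IsOpen W →
    ∃ U, x ∈ U ∧ U ⊆ W ∧ IsCompact U ∧ S.IsOpenBisection U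

def IsCompactOpenBisection (U : Set G) : Prop := IsCompact U ∧ S.IsOpenBisection U

/-- `G` is effective if the interior of the isotropy bundle is the unit space. -/
def IsEffective : Prop := interior S.IsoSet = S.unitSpace

variable (R : Type*) [CommRing R]

/-- The underlying set of the Steinberg algebra `A_R(G)`: locally constant,
compactly supported `R`-valued functions on `G`.  (The groupoid structure argument is
only used for the `A_R(G)` notation `S.SteinSet R`.) -/
def SteinSet (_Sg : GroupoidStr G) : Set (G → R) :=
  {f | IsLocallyConstant f ∧ HasCompactSupport f}

variable {R}

/-- Convolution: `(f * g) γ = ∑_{αβ = γ} f α * g β`. -/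
noncomputable def conv (f g : G → R) : G → R := fun γ =>
  ∑ᶠ p ∈ {p : G × G | S.d p.1 = S.r p.2 ∧ S.mul p.1 p.2 = γ}, f p.1 * g p.2

end Top

end GroupoidStr

namespace GroupoidStr

variable {G : Type*} [TopologicalSpace G] (S : GroupoidStr G)
variable {R : Type*} [CommRing R]

/-- A (two-sided, ring) ideal of the Steinberg algebra `A_R(G)`. -/
def IsIdealOf (I : Set (G → R)) : Prop :=
  I ⊆ S.SteinSet R ∧ (0 : G → R) ∈ I ∧
    (∀ f ∈ I, ∀ g ∈ I, f - g ∈ I) ∧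
    (∀ f ∈ I, ∀ g ∈ S.SteinSet R, S.conv f g ∈ I ∧ S.conv g f ∈ I)

/-- A subset of the unit space which is open in the relative topology of `G⁰`. -/
def IsRelOpen (U : Set G) : Prop :=
  U ⊆ S.unitSpace ∧ ∃ W : Set G, IsOpen W ∧ U = W ∩ S.unitSpace

end GroupoidStr

namespace GroupoidStr

variable {G : Type*} [TopologicalSpace G] (S : GroupoidStr G)

/-- The restriction `G|_D = {γ : d γ ∈ D, r γ ∈ D}` of the groupoid to a set `D`. -/
def restrictG (D : Set G) : Set G := {γ : G | S.d γ ∈ D ∧ S.r γ ∈ D}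

/-- The interior of `A` relative to the subspace `B` (as a subset of `B`). -/
def relInt (_Sg : GroupoidStr G) (B A : Set G) : Set G :=
  {x : G | x ∈ B ∧ ∃ V : Set G, IsOpen V ∧ x ∈ V ∧ V ∩ B ⊆ A}

/-- `G` is strongly effective: for every nonempty (relatively) closed invariant subset
`D` of `G⁰`, the restricted groupoid `G|_D` is effective, i.e. the interior (relative
to `G|_D`) of its isotropy bundle is its unit space `D`. -/
def IsStronglyEffective : Prop :=
  ∀ D : Set G, D ⊆ S.unitSpace → D.Nonempty →
    (∃ C : Set G, IsClosed C ∧ D = C ∩ S.unitSpace) → S.IsInvariant D →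
    S.relInt (S.restrictG D) (S.IsoSet ∩ S.restrictG D) = D

variable (R : Type*) [CommRing R]

/-- The ideal `I(U) = span { 1_B : B a compact open bisection with d(B) ⊆ U }` of the
Steinberg algebra associated to an (open invariant) subset `U` of the unit space. -/
def idealOf (U : Set G) : Set (G → R) :=
  (Submodule.span R {f : G → R | ∃ B : Set G,
      S.IsCompactOpenBisection B ∧ S.d '' B ⊆ U ∧
      f = B.indicator (fun _ => (1 : R))} : Submodule R (G → R))

end GroupoidStr

namespace GroupoidStr

variable {G : Type*} [TopologicalSpace G] (S : GroupoidStr G)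

/-- The open subgroupoid `H` of `G` is strongly effective: for every nonempty
(relatively) closed invariant subset `D` of the unit space, the restriction `H|_D` is
effective. -/
def IsStronglyEffectiveOn (H : Set G) : Prop :=
  ∀ D : Set G, D ⊆ S.unitSpace → D.Nonempty →
    (∃ C : Set G, IsClosed C ∧ D = C ∩ S.unitSpace) →
    (∀ γ ∈ H, S.d γ ∈ D → S.r γ ∈ D) →
    S.relInt (H ∩ S.restrictG D) (S.IsoSet ∩ (H ∩ S.restrictG D)) = D

variable {R : Type*} [CommRing R] {Γ : Type*}

/-- A graded ideal of `A_R(G)` (with the grading induced by a cocycle `c : G → Γ`):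
an ideal containing each homogeneous component of each of its elements. -/
def IsGradedIdealOf (c : G → Γ) (I : Set (G → R)) : Prop :=
  S.IsIdealOf I ∧ ∀ f ∈ I, ∀ γ : Γ, ({x : G | c x = γ}.indicator f) ∈ I

end GroupoidStr

namespace GroupoidStr

variable {G : Type*} (S : GroupoidStr G)

section Algebra

-- basic algebra
lemma d_inv (x : G) : S.d (S.inv x) = S.r x := by
  unfold d r; rw [S.inv_inv]

lemma r_inv (x : G) : S.r (S.inv x) = S.d x := by
  unfold d r; rw [S.inv_inv]

lemma mul_d' (x : G) : S.mul x (S.d x) = x := S.mul_d x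
lemma r_mul' (x : G) : S.mul (S.r x) x = x := S.r_mul x

lemma assoc' {x y z : G} (h1 : S.d x = S.r y) (h2 : S.d y = S.r z) :
    S.mul (S.mul x y) z = S.mul x (S.mul y z) := S.assoc x y z h1 h2

lemma d_mul {x y : G} (h : S.d x = S.r y) : S.d (S.mul x y) = S.d y := S.d_comp x y h
lemma r_mul_eq {x y : G} (h : S.d x = S.r y) : S.r (S.mul x y) = S.r x := S.r_comp x y h
lemma inv_mul' {x y : G} (h : S.d x = S.r y) :
    S.inv (S.mul x y) = S.mul (S.inv y) (S.inv x) := S.inv_mul x y h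

lemma inv_d (x : G) : S.inv (S.d x) = S.d x := S.unit_self_inv x

lemma unit_idem' (x : G) : S.mul (S.d x) (S.d x) = S.d x := S.unit_idem x

lemma d_d (x : G) : S.d (S.d x) = S.d x := by
  show S.mul (S.inv (S.d x)) (S.d x) = S.d x
  rw [S.inv_d]; exact S.unit_idem' x

lemma r_d (x : G) : S.r (S.d x) = S.d x := by
  show S.mul (S.d x) (S.inv (S.d x)) = S.d x
  rw [S.inv_d]; exact S.unit_idem' x

lemma d_r (x : G) : S.d (S.r x) = S.r x := by
  rw [← S.d_inv x]; exact S.d_d _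
lemma r_r (x : G) : S.r (S.r x) = S.r x := by
  rw [← S.d_inv x]; exact S.r_d _
lemma inv_r (x : G) : S.inv (S.r x) = S.r x := by
  rw [← S.d_inv x]; exact S.inv_d _

-- units
lemma mem_unitSpace_iff {u : G} : u ∈ S.unitSpace ↔ S.d u = u := by
  constructor
  · rintro ⟨x, rfl⟩; exact S.d_d x
  · intro h; exact ⟨u, h⟩

lemma unit_d {u : G} (hu : u ∈ S.unitSpace) : S.d u = u := (S.mem_unitSpace_iff).1 hu
lemma unit_r {u : G} (hu : u ∈ S.unitSpace) : S.r u = u := by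
  obtain ⟨x, rfl⟩ := hu; exact S.r_d x
lemma unit_inv {u : G} (hu : u ∈ S.unitSpace) : S.inv u = u := by
  obtain ⟨x, rfl⟩ := hu; exact S.inv_d x

lemma d_mem_unitSpace (x : G) : S.d x ∈ S.unitSpace := ⟨x, rfl⟩
lemma r_mem_unitSpace (x : G) : S.r x ∈ S.unitSpace := by
  rw [← S.d_inv x]; exact ⟨_, rfl⟩

-- cancellation
lemma mul_inv_cancel_right {x y : G} (h : S.d x = S.r y) :
    S.mul (S.mul x y) (S.inv y) = x := by
  rw [S.assoc' h (S.r_inv y).symm]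
  show S.mul x (S.r y) = x
  rw [← h]; exact S.mul_d' x

lemma inv_mul_cancel_left {x y : G} (h : S.d x = S.r y) :
    S.mul (S.inv x) (S.mul x y) = y := by
  rw [← S.assoc' (S.d_inv x) h]
  show S.mul (S.d x) y = y
  rw [h]; exact S.r_mul' y



lemma unit_mul {u x : G} (h : S.r x = u) : S.mul u x = x := by
  rw [← h]; exact S.r_mul' x

lemma mul_unit {u x : G} (h : S.d x = u) : S.mul x u = x := by
  rw [← h]; exact S.mul_d' x

lemma eq_mul_inv_of_mul_eq {a b x : G} (hc : S.d a = S.r b) (h : S.mul a b = x) :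
    a = S.mul x (S.inv b) := by
  rw [← h, S.mul_inv_cancel_right hc]

lemma eq_inv_mul_of_mul_eq {a b x : G} (hc : S.d a = S.r b) (h : S.mul a b = x) :
    b = S.mul (S.inv a) x := by
  rw [← h, S.inv_mul_cancel_left hc]

/-- composability of x and inv y given d x = d y -/
lemma comp_inv_right {x y : G} (h : S.d x = S.d y) : S.d x = S.r (S.inv y) := by
  rw [S.r_inv]; exact h

lemma comp_inv_left {x y : G} (h : S.r x = S.r y) : S.d (S.inv x) = S.r y := by
  rw [S.d_inv]; exact h

end Algebra

section TopologyBasics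

variable [TopologicalSpace G]

lemma continuous_mul2 (hTop : S.IsTopological) {α : Type*} [TopologicalSpace α] {f g : α → G} {s : Set α}
    (hf : ContinuousOn f s) (hg : ContinuousOn g s)
    (hcomp : ∀ x ∈ s, S.d (f x) = S.r (g x)) :
    ContinuousOn (fun x => S.mul (f x) (g x)) s := by
  rw [continuousOn_iff_continuous_restrict] at hf hg ⊢
  have : Continuous (fun x : s => (⟨(f x.1, g x.1), hcomp x.1 x.2⟩ :
      {p : G × G // S.d p.1 = S.r p.2})) := by
    apply Continuous.subtype_mk
    exact hf.prodMk hg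
  exact hTop.2.comp this

lemma continuous_d (hTop : S.IsTopological) : Continuous S.d := by
  have : ContinuousOn (fun x : G => S.mul (S.inv x) x) univ := by
    refine S.continuous_mul2 hTop (hTop.1.continuousOn) continuous_id.continuousOn ?_
    intro x _; rw [S.d_inv]
  rw [continuousOn_univ] at this
  exact this

lemma continuous_r (hTop : S.IsTopological) : Continuous S.r := by
  have : ContinuousOn (fun x : G => S.mul x (S.inv x)) univ := by
    refine S.continuous_mul2 hTop continuous_id.continuousOn (hTop.1.continuousOn) ?_
    intro x _; rw [S.r_inv]
  rw [continuousOn_univ] at this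
  exact this

lemma inv_image_eq_preimage (A : Set G) : S.inv '' A = S.inv ⁻¹' A := by
  ext x
  constructor
  · rintro ⟨a, ha, rfl⟩; simpa [S.inv_inv] using ha
  · intro hx; exact ⟨S.inv x, hx, S.inv_inv x⟩

lemma isOpen_inv_image (hTop : S.IsTopological) {A : Set G} (hA : IsOpen A) : IsOpen (S.inv '' A) := by
  rw [S.inv_image_eq_preimage]; exact hA.preimage hTop.1

lemma isCompact_inv_image (hTop : S.IsTopological) {A : Set G} (hA : IsCompact A) : IsCompact (S.inv '' A) :=
  hA.image hTop.1

variable [T2Space G]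

lemma isClosed_unitSpace (hTop : S.IsTopological) : IsClosed S.unitSpace := by
  have : S.unitSpace = {x : G | S.d x = x} := by
    ext x; exact ⟨fun h => S.unit_d h, fun h => ⟨x, h⟩⟩
  rw [this]
  exact isClosed_eq (S.continuous_d hTop) continuous_id

lemma isOpen_unitSpace (hTop : S.IsTopological) (hAmple : S.IsAmple) : IsOpen S.unitSpace := by
  rw [isOpen_iff_forall_mem_open]
  intro u hu
  obtain ⟨B, huB, -, -, hBis⟩ := hAmple u univ (mem_univ u) isOpen_univ
  -- continuity of multiplication at (u,u)
  have hcomp : S.d u = S.r u := by rw [S.unit_d hu, S.unit_r hu]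
  have huu : S.mul u u = u := by
    have := S.unit_mul (x := u) (u := u) (S.unit_r hu); exact this
  have hcont := hTop.2
  have hmem : (⟨(u, u), hcomp⟩ : {p : G × G // S.d p.1 = S.r p.2}) ∈
      (fun p : {p : G × G // S.d p.1 = S.r p.2} => S.mul p.1.1 p.1.2) ⁻¹' B := by
    simp only [mem_preimage]; rw [huu]; exact huB
  have hopen := (hBis.1.preimage hcont)
  rw [isOpen_induced_iff] at hopen
  obtain ⟨P, hP, hPeq⟩ := hopen
  have huP : ((u, u) : G × G) ∈ P := by
    have : (⟨(u, u), hcomp⟩ : {p : G × G // S.d p.1 = S.r p.2}) ∈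
        Subtype.val ⁻¹' P := by rw [hPeq]; exact hmem
    exact this
  obtain ⟨A1, A2, hA1, hA2, hu1, hu2, hsub⟩ := isOpen_prod_iff.1 hP u u huP
  set V := A1 ∩ A2 ∩ B with hV
  have hVopen : IsOpen V := (hA1.inter hA2).inter hBis.1
  have huV : u ∈ V := ⟨⟨hu1, hu2⟩, huB⟩
  refine ⟨V ∩ S.r ⁻¹' (S.d '' V), ?_, ?_, ?_⟩
  · -- subset of unitSpace
    rintro x ⟨hxV, hxr⟩
    obtain ⟨y, hyV, hyd⟩ := hxr
    have hyx : S.d y = S.r x := hyd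
    have hyB : y ∈ B := hyV.2
    have hprod : S.mul y x ∈ B := by
      have hyA1 : y ∈ A1 := hyV.1.1
      have hxA2 : x ∈ A2 := hxV.1.2
      have : ((y, x) : G × G) ∈ A1 ×ˢ A2 := ⟨hyA1, hxA2⟩
      have hPmem : ((y, x) : G × G) ∈ P := hsub this
      have : (⟨(y, x), hyx⟩ : {p : G × G // S.d p.1 = S.r p.2}) ∈ Subtype.val ⁻¹' P :=
        hPmem
      rw [hPeq] at this
      exact this
    have hre : S.r (S.mul y x) = S.r y := S.r_mul_eq hyx
    have : S.mul y x = y := hBis.2.2.1 hprod hyB hre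
    have hx : x = S.d y := by
      have := S.eq_inv_mul_of_mul_eq hyx this
      rw [this]
      show S.mul (S.inv y) y = S.d y
      rfl
    rw [hx]; exact S.d_mem_unitSpace y
  · -- open
    exact hVopen.inter ((hBis.2.2.2.1 V (by intro x hx; exact hx.2) hVopen).preimage
      (S.continuous_r hTop))
  · exact ⟨huV, ⟨u, huV, hcomp⟩⟩

end TopologyBasics

section Sections

variable [TopologicalSpace G]

open Classical in
noncomputable def secd (B : Set G) (v : G) : G :=
  if h : ∃ b ∈ B, S.d b = v then h.choose else v

lemma secd_mem {B : Set G} {v : G} (h : v ∈ S.d '' B) :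
    S.secd B v ∈ B ∧ S.d (S.secd B v) = v := by
  obtain ⟨b, hb, rfl⟩ := h
  have hex : ∃ b' ∈ B, S.d b' = S.d b := ⟨b, hb, rfl⟩
  rw [secd, dif_pos hex]
  exact ⟨hex.choose_spec.1, hex.choose_spec.2⟩

lemma secd_eq {B : Set G} (hB : Set.InjOn S.d B) {b : G} (hb : b ∈ B) :
    S.secd B (S.d b) = b := by
  have h := S.secd_mem (B := B) ⟨b, hb, rfl⟩
  exact hB h.1 hb h.2

lemma continuousOn_secd {B : Set G} (hB : S.IsOpenBisection B) :
    ContinuousOn (S.secd B) (S.d '' B) := by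
  rw [continuousOn_iff]
  intro v hv t ht hvt
  refine ⟨S.d '' (B ∩ t), hB.2.2.2.1 _ (inter_subset_left) (hB.1.inter ht), ?_, ?_⟩
  · obtain ⟨b, hb, rfl⟩ := hv
    refine ⟨b, ⟨hb, ?_⟩, rfl⟩
    rw [S.secd_eq hB.2.1 hb] at hvt; exact hvt
  · rintro w ⟨⟨b, ⟨hbB, hbt⟩, rfl⟩, -⟩
    rw [mem_preimage, S.secd_eq hB.2.1 hbB]; exact hbt

open Classical in
noncomputable def secr (B : Set G) (v : G) : G :=
  if h : ∃ b ∈ B, S.r b = v then h.choose else v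

lemma secr_mem {B : Set G} {v : G} (h : v ∈ S.r '' B) :
    S.secr B v ∈ B ∧ S.r (S.secr B v) = v := by
  obtain ⟨b, hb, rfl⟩ := h
  have hex : ∃ b' ∈ B, S.r b' = S.r b := ⟨b, hb, rfl⟩
  rw [secr, dif_pos hex]
  exact ⟨hex.choose_spec.1, hex.choose_spec.2⟩

lemma secr_eq {B : Set G} (hB : Set.InjOn S.r B) {b : G} (hb : b ∈ B) :
    S.secr B (S.r b) = b := by
  have h := S.secr_mem (B := B) ⟨b, hb, rfl⟩
  exact hB h.1 hb h.2

lemma continuousOn_secr {B : Set G} (hB : S.IsOpenBisection B) :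
    ContinuousOn (S.secr B) (S.r '' B) := by
  rw [continuousOn_iff]
  intro v hv t ht hvt
  refine ⟨S.r '' (B ∩ t), hB.2.2.2.2 _ (inter_subset_left) (hB.1.inter ht), ?_, ?_⟩
  · obtain ⟨b, hb, rfl⟩ := hv
    refine ⟨b, ⟨hb, ?_⟩, rfl⟩
    rw [S.secr_eq hB.2.2.1 hb] at hvt; exact hvt
  · rintro w ⟨⟨b, ⟨hbB, hbt⟩, rfl⟩, -⟩
    rw [mem_preimage, S.secr_eq hB.2.2.1 hbB]; exact hbt

end Sections

section SetMul

variable [TopologicalSpace G]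

/-- product of two subsets of the groupoid -/
def setMul (A B : Set G) : Set G :=
  {z : G | ∃ a ∈ A, ∃ b ∈ B, S.d a = S.r b ∧ z = S.mul a b}

lemma isClosed_composable [T2Space G] (hTop : S.IsTopological) :
    IsClosed {p : G × G | S.d p.1 = S.r p.2} :=
  isClosed_eq ((S.continuous_d hTop).comp continuous_fst)
    ((S.continuous_r hTop).comp continuous_snd)

lemma continuousOn_uncurry_mul (hTop : S.IsTopological) :
    ContinuousOn (fun p : G × G => S.mul p.1 p.2) {p : G × G | S.d p.1 = S.r p.2} := by
  exact S.continuous_mul2 hTop continuous_fst.continuousOn continuous_snd.continuousOn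
    (fun p hp => hp)

lemma setMul_eq_image (A B : Set G) :
    S.setMul A B = (fun p : G × G => S.mul p.1 p.2) ''
      ((A ×ˢ B) ∩ {p : G × G | S.d p.1 = S.r p.2}) := by
  ext z
  constructor
  · rintro ⟨a, ha, b, hb, hc, rfl⟩; exact ⟨(a, b), ⟨⟨ha, hb⟩, hc⟩, rfl⟩
  · rintro ⟨⟨a, b⟩, ⟨⟨ha, hb⟩, hc⟩, rfl⟩; exact ⟨a, ha, b, hb, hc, rfl⟩

lemma isCompact_setMul [T2Space G] (hTop : S.IsTopological) {A B : Set G}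
    (hA : IsCompact A) (hB : IsCompact B) : IsCompact (S.setMul A B) := by
  rw [S.setMul_eq_image]
  refine IsCompact.image_of_continuousOn ?_
    ((S.continuousOn_uncurry_mul hTop).mono inter_subset_right)
  exact (hA.prod hB).inter_right (S.isClosed_composable hTop)

lemma setMul_unit_left {V A : Set G} (hV : V ⊆ S.unitSpace) :
    S.setMul V A = A ∩ S.r ⁻¹' V := by
  ext z
  constructor
  · rintro ⟨v, hv, a, ha, hc, rfl⟩
    have hvu := S.unit_d (hV hv)
    have : S.mul v a = a := S.unit_mul (by rw [← hc, hvu])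
    rw [this]
    refine ⟨ha, ?_⟩
    show S.r a ∈ V
    rw [← hc, hvu]; exact hv
  · rintro ⟨ha, hrz⟩
    refine ⟨S.r z, hrz, z, ha, ?_, ?_⟩
    · rw [S.unit_d (S.r_mem_unitSpace z)]
    · rw [S.unit_mul rfl]

lemma setMul_unit_right {V A : Set G} (hV : V ⊆ S.unitSpace) :
    S.setMul A V = A ∩ S.d ⁻¹' V := by
  ext z
  constructor
  · rintro ⟨a, ha, v, hv, hc, rfl⟩
    have hvu := S.unit_r (hV hv)
    have : S.mul a v = a := S.mul_unit (by rw [hc, hvu])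
    rw [this]
    refine ⟨ha, ?_⟩
    show S.d a ∈ V
    rw [hc, hvu]; exact hv
  · rintro ⟨ha, hdz⟩
    refine ⟨z, ha, S.d z, hdz, ?_, ?_⟩
    · rw [S.unit_r (S.d_mem_unitSpace z)]
    · rw [S.mul_unit rfl]

end SetMul

section FinsumHelpers

variable {α : Type*} {M : Type*} [AddCommMonoid M]

lemma finsum_mem_eq_zero' {s : Set α} {f : α → M} (h : ∀ b ∈ s, f b = 0) :
    ∑ᶠ i ∈ s, f i = 0 := by
  rw [← finsum_mem_inter_support]
  have : s ∩ support f = ∅ := by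
    ext b; simp only [mem_inter_iff, mem_support, mem_empty_iff_false, iff_false, not_and,
      not_not]
    exact h b
  rw [this, finsum_mem_empty]

lemma finsum_mem_eq_of_unique {s : Set α} {f : α → M} {a : α} (ha : a ∈ s)
    (h : ∀ b ∈ s, f b ≠ 0 → b = a) : ∑ᶠ i ∈ s, f i = f a := by
  rw [← finsum_mem_inter_support]
  have hsub : s ∩ support f ⊆ {a} := by
    rintro b ⟨hb, hb'⟩; exact h b hb hb'
  rcases (Set.subset_singleton_iff_eq).1 hsub with h0 | h1
  · rw [h0, finsum_mem_empty]
    by_contra hne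
    have : a ∈ s ∩ support f := ⟨ha, fun hfa => hne (by rw [hfa])⟩
    rw [h0] at this; exact this
  · rw [h1, finsum_mem_singleton]

lemma exists_ne_zero_of_finsum_mem_ne_zero {s : Set α} {f : α → M}
    (h : ∑ᶠ i ∈ s, f i ≠ 0) : ∃ b ∈ s, f b ≠ 0 := by
  by_contra hc
  push_neg at hc
  exact h (finsum_mem_eq_zero' hc)

lemma finsum_mem_add' {s : Set α} {F₁ F₂ : α → M} (h1 : (s ∩ support F₁).Finite)
    (h2 : (s ∩ support F₂).Finite) :
    ∑ᶠ i ∈ s, (F₁ i + F₂ i) = (∑ᶠ i ∈ s, F₁ i) + ∑ᶠ i ∈ s, F₂ i := by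
  rw [finsum_mem_def, finsum_mem_def, finsum_mem_def, Set.indicator_add]
  exact finsum_add_distrib (by show (support _).Finite; rw [support_indicator]; exact h1)
    (by show (support _).Finite; rw [support_indicator]; exact h2)

lemma finsum_mem_const_mul' {R : Type*} [Semiring R] {s : Set α} {F : α → R} (a : R)
    (h : (s ∩ support F).Finite) :
    ∑ᶠ i ∈ s, a * F i = a * ∑ᶠ i ∈ s, F i := by
  rw [finsum_mem_def, finsum_mem_def,
    mul_finsum' _ a (by show (support _).Finite; rw [support_indicator]; exact h)]
  congr 1
  funext x
  by_cases hx : x ∈ s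
  · rw [Set.indicator_of_mem hx, Set.indicator_of_mem hx]
  · rw [Set.indicator_of_notMem hx, Set.indicator_of_notMem hx, mul_zero]

end FinsumHelpers

section ConvBasics

variable [TopologicalSpace G] {R : Type*} [CommRing R]

lemma pair_unique_left {B : Set G} (hB : Set.InjOn S.r B) {x : G} {p q : G × G}
    (hp : S.d p.1 = S.r p.2 ∧ S.mul p.1 p.2 = x)
    (hq : S.d q.1 = S.r q.2 ∧ S.mul q.1 q.2 = x)
    (hpB : p.1 ∈ B) (hqB : q.1 ∈ B) : p = q := by
  have hr1 : S.r p.1 = S.r x := by rw [← hp.2, S.r_mul_eq hp.1]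
  have hr2 : S.r q.1 = S.r x := by rw [← hq.2, S.r_mul_eq hq.1]
  have h1 : p.1 = q.1 := hB hpB hqB (by rw [hr1, hr2])
  have h2 : p.2 = q.2 := by
    rw [S.eq_inv_mul_of_mul_eq hp.1 hp.2, S.eq_inv_mul_of_mul_eq hq.1 hq.2, h1]
  exact Prod.ext h1 h2

lemma pair_unique_right {C : Set G} (hC : Set.InjOn S.d C) {x : G} {p q : G × G}
    (hp : S.d p.1 = S.r p.2 ∧ S.mul p.1 p.2 = x)
    (hq : S.d q.1 = S.r q.2 ∧ S.mul q.1 q.2 = x)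
    (hpC : p.2 ∈ C) (hqC : q.2 ∈ C) : p = q := by
  have hd1 : S.d p.2 = S.d x := by rw [← hp.2, S.d_mul hp.1]
  have hd2 : S.d q.2 = S.d x := by rw [← hq.2, S.d_mul hq.1]
  have h2 : p.2 = q.2 := hC hpC hqC (by rw [hd1, hd2])
  have h1 : p.1 = q.1 := by
    rw [S.eq_mul_inv_of_mul_eq hp.1 hp.2, S.eq_mul_inv_of_mul_eq hq.1 hq.2, h2]
  exact Prod.ext h1 h2

lemma conv_indicator_right {C : Set G} (hC : Set.InjOn S.d C) (f : G → R) (b : R) :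
    S.conv f (C.indicator fun _ => b) =
      (S.d ⁻¹' (S.d '' C)).indicator
        (fun x => f (S.mul x (S.inv (S.secd C (S.d x)))) * b) := by
  funext x
  by_cases hx : S.d x ∈ S.d '' C
  · set β := S.secd C (S.d x) with hβdef
    obtain ⟨hβC, hβd⟩ := S.secd_mem hx
    have hc1 : S.d x = S.r (S.inv β) := S.comp_inv_right hβd.symm
    set α := S.mul x (S.inv β) with hαdef
    have hc2 : S.d α = S.r β := by
      rw [hαdef, S.d_mul hc1, S.d_inv]
    have hmul : S.mul α β = x := by
      rw [hαdef, S.assoc' hc1 (S.d_inv β)]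
      show S.mul x (S.d β) = x
      rw [hβd]
      exact S.mul_unit rfl
    rw [Set.indicator_of_mem (show x ∈ S.d ⁻¹' (S.d '' C) from hx)]
    show S.conv f (C.indicator fun _ => b) x = f α * b
    unfold conv
    have hmem0 : (α, β) ∈ {p : G × G | S.d p.1 = S.r p.2 ∧ S.mul p.1 p.2 = x} :=
      ⟨hc2, hmul⟩
    have huniq : ∀ p ∈ {p : G × G | S.d p.1 = S.r p.2 ∧ S.mul p.1 p.2 = x},
        f p.1 * (C.indicator fun _ => b) p.2 ≠ 0 → p = (α, β) := by
      rintro ⟨a', b'⟩ hmem hne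
      have hb'C : b' ∈ C := by
        by_contra hb'
        rw [Set.indicator_of_notMem hb', mul_zero] at hne
        exact hne rfl
      exact S.pair_unique_right hC hmem ⟨hc2, hmul⟩ hb'C hβC
    rw [finsum_mem_eq_of_unique hmem0 huniq, Set.indicator_of_mem hβC]
  · rw [Set.indicator_of_notMem (show x ∉ S.d ⁻¹' (S.d '' C) from hx)]
    unfold conv
    apply finsum_mem_eq_zero'
    rintro ⟨a', b'⟩ hmem
    have hb' : b' ∉ C := by
      intro hb'
      exact hx ⟨b', hb', by rw [← hmem.2, S.d_mul hmem.1]⟩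
    rw [Set.indicator_of_notMem hb', mul_zero]

lemma conv_indicator_left {B : Set G} (hB : Set.InjOn S.r B) (f : G → R) (b : R) :
    S.conv (B.indicator fun _ => b) f =
      (S.r ⁻¹' (S.r '' B)).indicator
        (fun x => b * f (S.mul (S.inv (S.secr B (S.r x))) x)) := by
  funext x
  by_cases hx : S.r x ∈ S.r '' B
  · set α := S.secr B (S.r x) with hαdef
    obtain ⟨hαB, hαr⟩ := S.secr_mem hx
    have hc1 : S.d (S.inv α) = S.r x := S.comp_inv_left hαr
    set β := S.mul (S.inv α) x with hβdef
    have hc2 : S.d α = S.r β := by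
      rw [hβdef, S.r_mul_eq hc1, S.r_inv]
    have hmul : S.mul α β = x := by
      rw [hβdef]
      have := S.inv_mul_cancel_left (x := S.inv α) (y := x) hc1
      rw [S.inv_inv] at this
      exact this
    rw [Set.indicator_of_mem (show x ∈ S.r ⁻¹' (S.r '' B) from hx)]
    show S.conv (B.indicator fun _ => b) f x = b * f β
    unfold conv
    have hmem0 : (α, β) ∈ {p : G × G | S.d p.1 = S.r p.2 ∧ S.mul p.1 p.2 = x} :=
      ⟨hc2, hmul⟩
    have huniq : ∀ p ∈ {p : G × G | S.d p.1 = S.r p.2 ∧ S.mul p.1 p.2 = x},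
        (B.indicator fun _ => b) p.1 * f p.2 ≠ 0 → p = (α, β) := by
      rintro ⟨a', b'⟩ hmem hne
      have ha' : a' ∈ B := by
        by_contra ha'
        rw [Set.indicator_of_notMem ha', zero_mul] at hne
        exact hne rfl
      exact S.pair_unique_left hB hmem ⟨hc2, hmul⟩ ha' hαB
    rw [finsum_mem_eq_of_unique hmem0 huniq, Set.indicator_of_mem hαB]
  · rw [Set.indicator_of_notMem (show x ∉ S.r ⁻¹' (S.r '' B) from hx)]
    unfold conv
    apply finsum_mem_eq_zero'
    rintro ⟨a', b'⟩ hmem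
    have ha' : a' ∉ B := by
      intro ha'
      exact hx ⟨a', ha', by rw [← hmem.2, S.r_mul_eq hmem.1]⟩
    rw [Set.indicator_of_notMem ha', zero_mul]

lemma conv_zero_right (f : G → R) : S.conv f 0 = 0 := by
  funext x
  unfold conv
  rw [show (0 : G → R) = fun _ => 0 from rfl]
  apply finsum_mem_eq_zero'
  intro p _; rw [mul_zero]

lemma conv_zero_left (f : G → R) : S.conv 0 f = 0 := by
  funext x
  unfold conv
  apply finsum_mem_eq_zero'
  intro p _; rw [show (0 : G → R) p.1 = 0 from rfl, zero_mul]

lemma conv_nonzero_witness {f g : G → R} {x : G} (h : S.conv f g x ≠ 0) :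
    ∃ p : G × G, (S.d p.1 = S.r p.2 ∧ S.mul p.1 p.2 = x) ∧ f p.1 ≠ 0 ∧ g p.2 ≠ 0 := by
  unfold conv at h
  obtain ⟨p, hp, hne⟩ := exists_ne_zero_of_finsum_mem_ne_zero h
  exact ⟨p, hp, left_ne_zero_of_mul hne, right_ne_zero_of_mul hne⟩

end ConvBasics

section SteinSetLemmas

variable [TopologicalSpace G] {R : Type*} [CommRing R]

lemma isLocallyConstant_iff_exists_open' {X Y : Type*} [TopologicalSpace X] (f : X → Y) :
    IsLocallyConstant f ↔ ∀ x, ∃ U, IsOpen U ∧ x ∈ U ∧ ∀ y ∈ U, f y = f x := by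
  constructor
  · intro h x
    exact ⟨f ⁻¹' {f x}, h _, rfl, fun y hy => hy⟩
  · intro h s
    rw [isOpen_iff_forall_mem_open]
    intro x hx
    obtain ⟨U, hU, hxU, hconst⟩ := h x
    exact ⟨U, fun y hy => by rw [mem_preimage, hconst y hy]; exact hx, hU, hxU⟩

lemma isLocallyConstant_indicator_const {s : Set G} (hso : IsOpen s) (hsc : IsClosed s)
    (b : R) : IsLocallyConstant (s.indicator fun _ => b) := by
  rw [isLocallyConstant_iff_exists_open']
  intro x
  by_cases hx : x ∈ s
  · exact ⟨s, hso, hx, fun y hy => by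
      rw [Set.indicator_of_mem hy, Set.indicator_of_mem hx]⟩
  · exact ⟨sᶜ, hsc.isOpen_compl, hx, fun y hy => by
      rw [Set.indicator_of_notMem hy, Set.indicator_of_notMem hx]⟩

lemma isLocallyConstant_indicator {s : Set G} (hso : IsOpen s) (hsc : IsClosed s)
    {f : G → R} (hf : IsLocallyConstant f) : IsLocallyConstant (s.indicator f) := by
  rw [isLocallyConstant_iff_exists_open']
  intro x
  by_cases hx : x ∈ s
  · refine ⟨s ∩ f ⁻¹' {f x}, hso.inter (hf _), ⟨hx, rfl⟩, ?_⟩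
    rintro y ⟨hy, hy'⟩
    rw [Set.indicator_of_mem hy, Set.indicator_of_mem hx, hy']
  · exact ⟨sᶜ, hsc.isOpen_compl, hx, fun y hy => by
      rw [Set.indicator_of_notMem hy, Set.indicator_of_notMem hx]⟩

variable [T2Space G]

lemma indicator_const_mem_SteinSet {B : Set G} (hBc : IsCompact B) (hBo : IsOpen B)
    (b : R) : B.indicator (fun _ => b) ∈ S.SteinSet R := by
  refine ⟨isLocallyConstant_indicator_const hBo hBc.isClosed b, ?_⟩
  apply HasCompactSupport.intro hBc
  intro x hx
  exact Set.indicator_of_notMem hx _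

lemma SteinSet_zero : (0 : G → R) ∈ S.SteinSet R := by
  constructor
  · rw [isLocallyConstant_iff_exists_open']
    exact fun x => ⟨univ, isOpen_univ, mem_univ x, fun _ _ => rfl⟩
  · apply HasCompactSupport.intro isCompact_empty
    intro x _; rfl

lemma SteinSet_add {f g : G → R} (hf : f ∈ S.SteinSet R) (hg : g ∈ S.SteinSet R) :
    f + g ∈ S.SteinSet R := by
  refine ⟨?_, hf.2.add hg.2⟩
  have := (hf.1.prodMk hg.1).comp (fun p : R × R => p.1 + p.2)
  exact this

lemma SteinSet_smul {f : G → R} (hf : f ∈ S.SteinSet R) (a : R) :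
    a • f ∈ S.SteinSet R := by
  constructor
  · have := hf.1.comp (fun x : R => a * x)
    exact this
  · apply HasCompactSupport.intro hf.2
    intro x hx
    have : f x = 0 := image_eq_zero_of_notMem_tsupport hx
    show a * f x = 0
    rw [this, mul_zero]

lemma SteinSet_neg {f : G → R} (hf : f ∈ S.SteinSet R) : -f ∈ S.SteinSet R := by
  have := S.SteinSet_smul hf (-1)
  have heq : (-1 : R) • f = -f := by funext x; simp
  rwa [heq] at this

lemma SteinSet_sub {f g : G → R} (hf : f ∈ S.SteinSet R) (hg : g ∈ S.SteinSet R) :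
    f - g ∈ S.SteinSet R := by
  have := S.SteinSet_add hf (S.SteinSet_neg hg)
  rwa [← sub_eq_add_neg] at this

lemma SteinSet_indicator {s : Set G} (hso : IsOpen s) (hsc : IsClosed s)
    {f : G → R} (hf : f ∈ S.SteinSet R) : s.indicator f ∈ S.SteinSet R := by
  refine ⟨isLocallyConstant_indicator hso hsc hf.1, ?_⟩
  apply HasCompactSupport.intro hf.2
  intro x hx
  have : f x = 0 := image_eq_zero_of_notMem_tsupport hx
  by_cases hxs : x ∈ s
  · rw [Set.indicator_of_mem hxs, this]
  · rw [Set.indicator_of_notMem hxs]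

lemma isOpen_support_of_SteinSet {f : G → R} (hf : f ∈ S.SteinSet R) :
    IsOpen (support f) := by
  have : support f = f ⁻¹' {0}ᶜ := by
    ext x; simp [mem_support]
  rw [this]; exact hf.1 _

lemma isClosed_support_of_SteinSet {f : G → R} (hf : f ∈ S.SteinSet R) :
    IsClosed (support f) := by
  have : (support f)ᶜ = f ⁻¹' {0} := by
    ext x; simp [mem_support]
  rw [← isOpen_compl_iff, this]; exact hf.1 _

lemma isCompact_support_of_SteinSet {f : G → R} (hf : f ∈ S.SteinSet R) :
    IsCompact (support f) :=
  IsCompact.of_isClosed_subset hf.2 (S.isClosed_support_of_SteinSet hf) subset_closure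

lemma exists_bisection_cover (hAmple : S.IsAmple) {f : G → R} (hf : f ∈ S.SteinSet R) :
    ∃ (n : ℕ) (Bs : Fin n → Set G), (∀ i, S.IsCompactOpenBisection (Bs i)) ∧
      support f ⊆ ⋃ i, Bs i := by
  classical
  set B : G → Set G := fun x => if h : True then
    (hAmple x univ (mem_univ x) isOpen_univ).choose else univ with hBdef
  have hB : ∀ x, x ∈ B x ∧ S.IsCompactOpenBisection (B x) := by
    intro x
    have h := (hAmple x univ (mem_univ x) isOpen_univ).choose_spec
    simp only [hBdef, dif_pos trivial]
    exact ⟨h.1, h.2.2.1, h.2.2.2⟩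
  have hK := S.isCompact_support_of_SteinSet hf
  obtain ⟨t, ht⟩ := hK.elim_finite_subcover B (fun x => (hB x).2.2.1)
    (fun y hy => mem_iUnion.2 ⟨y, (hB y).1⟩)
  refine ⟨t.toList.length, fun i => B (t.toList.get i), fun i => (hB _).2, ?_⟩
  intro y hy
  obtain ⟨x, hxt, hyx⟩ := by
    have := ht hy
    rwa [mem_iUnion₂] at this
  have hxl : x ∈ t.toList := Finset.mem_toList.2 hxt
  obtain ⟨i, hi⟩ := List.mem_iff_get.1 hxl
  exact mem_iUnion.2 ⟨i, by rw [hi]; exact hyx⟩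

end SteinSetLemmas

section Span

variable [TopologicalSpace G] {R : Type*} [CommRing R] [T2Space G]

lemma isOpenBisection_subset {B V : Set G} (hB : S.IsOpenBisection B) (hV : IsOpen V)
    (hsub : V ⊆ B) : S.IsOpenBisection V :=
  ⟨hV, hB.2.1.mono hsub, hB.2.2.1.mono hsub,
    fun W hW hWo => hB.2.2.2.1 W (hW.trans hsub) hWo,
    fun W hW hWo => hB.2.2.2.2 W (hW.trans hsub) hWo⟩

lemma isCompactOpenBisection_diff {B C : Set G} (hB : S.IsCompactOpenBisection B)
    (hCo : IsOpen C) (hCc : IsCompact C) : S.IsCompactOpenBisection (B \ C) := by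
  have hopen : IsOpen (B \ C) := hB.2.1.sdiff hCc.isClosed
  refine ⟨?_, S.isOpenBisection_subset hB.2 hopen diff_subset⟩
  exact hB.1.inter_right (isClosed_compl_iff.2 hCo)

lemma spanAux (K : Set G) : ∀ (n : ℕ) (f : G → R) (Bs : Fin n → Set G),
    (∀ i, S.IsCompactOpenBisection (Bs i)) →
    (∀ i, ∀ x ∈ Bs i, ∀ y ∈ Bs i, f x = f y) →
    (∀ i, Bs i ⊆ support f) →
    support f ⊆ ⋃ i, Bs i → support f ⊆ K →
    f ∈ Submodule.span R {g : G → R | ∃ B : Set G,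
      S.IsCompactOpenBisection B ∧ B ⊆ K ∧ g = B.indicator fun _ => (1 : R)} := by
  intro n
  induction n with
  | zero =>
    intro f Bs _ _ _ hcov _
    have : f = 0 := by
      funext x
      by_contra hx
      obtain ⟨i, -⟩ := mem_iUnion.1 (hcov (show x ∈ support f from hx))
      exact absurd i.2 (by omega)
    rw [this]; exact Submodule.zero_mem _
  | succ n ih =>
    intro f Bs hCOB hconst hBsub hcov hK
    by_cases hB0 : (Bs 0).Nonempty
    · obtain ⟨x₀, hx₀⟩ := hB0
      set a := f x₀ with ha
      set f' := f - a • (Bs 0).indicator (fun _ => (1 : R)) with hf'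
      have hval' : ∀ x, x ∉ Bs 0 → f' x = f x := by
        intro x hx
        show f x - a * (Bs 0).indicator (fun _ => (1:R)) x = f x
        rw [Set.indicator_of_notMem hx, mul_zero, sub_zero]
      have hval0 : ∀ x ∈ Bs 0, f' x = 0 := by
        intro x hx
        show f x - a * (Bs 0).indicator (fun _ => (1:R)) x = 0
        rw [Set.indicator_of_mem hx, mul_one, hconst 0 x hx x₀ hx₀, sub_self]
      have hsupp' : support f' ⊆ support f \ Bs 0 := by
        intro x hx
        by_cases hx0 : x ∈ Bs 0
        · exact absurd (hval0 x hx0) hx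
        · exact ⟨by rw [mem_support, ← hval' x hx0]; exact hx, hx0⟩
      set Bs' : Fin n → Set G := fun i => Bs i.succ \ Bs 0 with hBs'
      have h1 : ∀ i, S.IsCompactOpenBisection (Bs' i) := fun i =>
        S.isCompactOpenBisection_diff (hCOB i.succ) (hCOB 0).2.1 (hCOB 0).1
      have h2 : ∀ i, ∀ x ∈ Bs' i, ∀ y ∈ Bs' i, f' x = f' y := by
        intro i x hx y hy
        rw [hval' x hx.2, hval' y hy.2]
        exact hconst i.succ x hx.1 y hy.1
      have h3 : ∀ i, Bs' i ⊆ support f' := by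
        intro i x hx
        rw [mem_support, hval' x hx.2]
        exact hBsub i.succ hx.1
      have h4 : support f' ⊆ ⋃ i, Bs' i := by
        intro x hx
        obtain ⟨hxf, hx0⟩ := hsupp' hx
        obtain ⟨j, hj⟩ := mem_iUnion.1 (hcov hxf)
        rcases Fin.eq_zero_or_eq_succ j with rfl | ⟨i, rfl⟩
        · exact absurd hj hx0
        · exact mem_iUnion.2 ⟨i, hj, hx0⟩
      have h5 : support f' ⊆ K := fun x hx => hK (hsupp' hx).1
      have hmem' := ih f' Bs' h1 h2 h3 h4 h5
      have hgen : (Bs 0).indicator (fun _ => (1 : R)) ∈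
          {g : G → R | ∃ B : Set G, S.IsCompactOpenBisection B ∧ B ⊆ K ∧
            g = B.indicator fun _ => (1 : R)} :=
        ⟨Bs 0, hCOB 0, (hBsub 0).trans hK, rfl⟩
      have : f = f' + a • (Bs 0).indicator (fun _ => (1 : R)) := by
        rw [hf', sub_add_cancel]
      rw [this]
      exact Submodule.add_mem _ hmem'
        (Submodule.smul_mem _ a (Submodule.subset_span hgen))
    · rw [Set.not_nonempty_iff_eq_empty] at hB0
      refine ih f (fun i => Bs i.succ) (fun i => hCOB i.succ)
        (fun i => hconst i.succ) (fun i => hBsub i.succ) ?_ hK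
      intro x hx
      obtain ⟨j, hj⟩ := mem_iUnion.1 (hcov hx)
      rcases Fin.eq_zero_or_eq_succ j with rfl | ⟨i, rfl⟩
      · rw [hB0] at hj; exact absurd hj (notMem_empty x)
      · exact mem_iUnion.2 ⟨i, hj⟩

lemma mem_span_of_SteinSet (hAmple : S.IsAmple) {f : G → R} (hf : f ∈ S.SteinSet R) :
    f ∈ Submodule.span R {g : G → R | ∃ B : Set G,
      S.IsCompactOpenBisection B ∧ B ⊆ support f ∧ g = B.indicator fun _ => (1 : R)} := by
  classical
  set B : support f → Set G := fun x =>
    (hAmple x.1 (f ⁻¹' {f x.1} ∩ support f)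
      ⟨rfl, x.2⟩ ((hf.1 _).inter (S.isOpen_support_of_SteinSet hf))).choose with hBdef
  have hB : ∀ x : support f, x.1 ∈ B x ∧ B x ⊆ f ⁻¹' {f x.1} ∩ support f ∧
      S.IsCompactOpenBisection (B x) := by
    intro x
    have h := (hAmple x.1 (f ⁻¹' {f x.1} ∩ support f)
      ⟨rfl, x.2⟩ ((hf.1 _).inter (S.isOpen_support_of_SteinSet hf))).choose_spec
    exact ⟨h.1, h.2.1, h.2.2.1, h.2.2.2⟩
  have hK := S.isCompact_support_of_SteinSet hf
  obtain ⟨t, ht⟩ := hK.elim_finite_subcover B (fun x => (hB x).2.2.2.1)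
    (fun y hy => mem_iUnion.2 ⟨⟨y, hy⟩, (hB ⟨y, hy⟩).1⟩)
  refine S.spanAux (support f) t.toList.length f (fun i => B (t.toList.get i))
    (fun i => (hB _).2.2) ?_ (fun i => ((hB _).2.1).trans inter_subset_right) ?_
    subset_rfl
  · intro i x hx y hy
    have hx' := ((hB _).2.1 hx).1
    have hy' := ((hB _).2.1 hy).1
    rw [show f x = f (t.toList.get i).1 from hx', show f y = f (t.toList.get i).1 from hy']
  · intro y hy
    obtain ⟨x, hxt, hyx⟩ := by
      have := ht hy
      rwa [mem_iUnion₂] at this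
    have hxl : x ∈ t.toList := Finset.mem_toList.2 hxt
    obtain ⟨i, hi⟩ := List.mem_iff_get.1 hxl
    exact mem_iUnion.2 ⟨i, by rw [hi]; exact hyx⟩

lemma generator_mem_SteinSet {B : Set G} (hB : S.IsCompactOpenBisection B) (b : R) :
    B.indicator (fun _ => b) ∈ S.SteinSet R :=
  S.indicator_const_mem_SteinSet hB.1 hB.2.1 b

lemma mem_idealOf_iff (hAmple : S.IsAmple) {U : Set G} {f : G → R} :
    f ∈ S.idealOf R U ↔ f ∈ S.SteinSet R ∧ ∀ x, f x ≠ 0 → S.d x ∈ U := by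
  constructor
  · intro hf
    refine Submodule.span_induction ?_ ?_ ?_ ?_ hf
    · rintro g ⟨B, hB, hBU, rfl⟩
      refine ⟨S.generator_mem_SteinSet hB 1, ?_⟩
      intro x hx
      have hxB : x ∈ B := by
        by_contra hxB
        rw [Set.indicator_of_notMem hxB] at hx
        exact hx rfl
      exact hBU ⟨x, hxB, rfl⟩
    · exact ⟨S.SteinSet_zero, fun x hx => absurd rfl hx⟩
    · rintro g h - - ⟨hg1, hg2⟩ ⟨hh1, hh2⟩
      refine ⟨S.SteinSet_add hg1 hh1, ?_⟩
      intro x hx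
      by_cases hgx : g x = 0
      · refine hh2 x ?_
        intro hhx
        exact hx (by show g x + h x = 0; rw [hgx, hhx, add_zero])
      · exact hg2 x hgx
    · rintro a g - ⟨hg1, hg2⟩
      refine ⟨S.SteinSet_smul hg1 a, ?_⟩
      intro x hx
      refine hg2 x ?_
      intro hgx
      exact hx (by show a * g x = 0; rw [hgx, mul_zero])
  · rintro ⟨hf, hU⟩
    have := S.mem_span_of_SteinSet hAmple hf
    refine Submodule.span_le.2 ?_ this
    rintro g ⟨B, hB, hBsub, rfl⟩
    apply Submodule.subset_span
    refine ⟨B, hB, ?_, rfl⟩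
    rintro v ⟨x, hx, rfl⟩
    exact hU x (hBsub hx)

end Span

section ConvClosure

variable [TopologicalSpace G] {R : Type*} [CommRing R] [T2Space G]

lemma finite_pairs_left {f g : G → R} {x : G} {n : ℕ} (Bs : Fin n → Set G)
    (hinj : ∀ i, Set.InjOn S.r (Bs i)) (hsub : support f ⊆ ⋃ i, Bs i) :
    ({p : G × G | S.d p.1 = S.r p.2 ∧ S.mul p.1 p.2 = x} ∩
      support fun p : G × G => f p.1 * g p.2).Finite := by
  have hsubT : ({p : G × G | S.d p.1 = S.r p.2 ∧ S.mul p.1 p.2 = x} ∩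
      support fun p : G × G => f p.1 * g p.2) ⊆
      ⋃ i, {p : G × G | (S.d p.1 = S.r p.2 ∧ S.mul p.1 p.2 = x) ∧ p.1 ∈ Bs i} := by
    rintro p ⟨hp, hps⟩
    have hf1 : f p.1 ≠ 0 := left_ne_zero_of_mul hps
    obtain ⟨i, hi⟩ := mem_iUnion.1 (hsub hf1)
    exact mem_iUnion.2 ⟨i, hp, hi⟩
  refine Set.Finite.subset (Set.finite_iUnion fun i => ?_) hsubT
  apply Set.Subsingleton.finite
  rintro p ⟨hp, hpB⟩ q ⟨hq, hqB⟩
  exact S.pair_unique_left (hinj i) hp hq hpB hqB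

lemma conv_add_right {f g₁ g₂ : G → R} {n : ℕ} (Bs : Fin n → Set G)
    (hinj : ∀ i, Set.InjOn S.r (Bs i)) (hsub : support f ⊆ ⋃ i, Bs i) :
    S.conv f (g₁ + g₂) = S.conv f g₁ + S.conv f g₂ := by
  funext x
  show S.conv f (g₁ + g₂) x = S.conv f g₁ x + S.conv f g₂ x
  unfold conv
  calc ∑ᶠ p ∈ {p : G × G | S.d p.1 = S.r p.2 ∧ S.mul p.1 p.2 = x},
        f p.1 * (g₁ + g₂) p.2
      = ∑ᶠ p ∈ {p : G × G | S.d p.1 = S.r p.2 ∧ S.mul p.1 p.2 = x},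
        (f p.1 * g₁ p.2 + f p.1 * g₂ p.2) := by
        apply finsum_mem_congr rfl
        intro p _
        show f p.1 * (g₁ p.2 + g₂ p.2) = _
        ring
    _ = _ := finsum_mem_add' (S.finite_pairs_left Bs hinj hsub)
        (S.finite_pairs_left Bs hinj hsub)

lemma conv_smul_right {f g : G → R} (a : R) {n : ℕ} (Bs : Fin n → Set G)
    (hinj : ∀ i, Set.InjOn S.r (Bs i)) (hsub : support f ⊆ ⋃ i, Bs i) :
    S.conv f (a • g) = a • S.conv f g := by
  funext x
  show S.conv f (a • g) x = a * S.conv f g x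
  unfold conv
  calc ∑ᶠ p ∈ {p : G × G | S.d p.1 = S.r p.2 ∧ S.mul p.1 p.2 = x},
        f p.1 * (a • g) p.2
      = ∑ᶠ p ∈ {p : G × G | S.d p.1 = S.r p.2 ∧ S.mul p.1 p.2 = x},
        a * (f p.1 * g p.2) := by
        apply finsum_mem_congr rfl
        intro p _
        show f p.1 * (a * g p.2) = _
        ring
    _ = _ := finsum_mem_const_mul' a (S.finite_pairs_left Bs hinj hsub)

lemma conv_indicator_right_mem_SteinSet (hTop : S.IsTopological) {C : Set G}
    (hC : S.IsCompactOpenBisection C) {f : G → R} (hf : f ∈ S.SteinSet R) (b : R) :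
    S.conv f (C.indicator fun _ => b) ∈ S.SteinSet R := by
  rw [S.conv_indicator_right hC.2.2.1 f b]
  set ρ : G → G := fun x => S.mul x (S.inv (S.secd C (S.d x))) with hρ
  set O : Set G := S.d ⁻¹' (S.d '' C) with hO
  have hdCopen : IsOpen (S.d '' C) := hC.2.2.2.2.1 C subset_rfl hC.2.1
  have hdCcomp : IsCompact (S.d '' C) := hC.1.image (S.continuous_d hTop)
  have hOopen : IsOpen O := hdCopen.preimage (S.continuous_d hTop)
  have hOclosed : IsClosed O := hdCcomp.isClosed.preimage (S.continuous_d hTop)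
  have hρcont : ContinuousOn ρ O := by
    apply S.continuous_mul2 hTop continuous_id.continuousOn
    · exact hTop.1.comp_continuousOn
        ((S.continuousOn_secd hC.2).comp (S.continuous_d hTop).continuousOn
          (fun x hx => hx))
    · intro x hx
      show S.d x = S.r (S.inv (S.secd C (S.d x)))
      rw [S.r_inv, (S.secd_mem hx).2]
  constructor
  · rw [isLocallyConstant_iff_exists_open']
    intro x
    by_cases hx : x ∈ O
    · have := (continuousOn_iff.1 hρcont) x hx (f ⁻¹' {f (ρ x)}) (hf.1 _) rfl
      obtain ⟨u, hu, hxu, husub⟩ := this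
      refine ⟨u ∩ O, hu.inter hOopen, ⟨hxu, hx⟩, ?_⟩
      rintro y ⟨hyu, hyO⟩
      rw [Set.indicator_of_mem hyO, Set.indicator_of_mem hx]
      have : ρ y ∈ f ⁻¹' {f (ρ x)} := husub ⟨hyu, hyO⟩
      rw [show f (ρ y) = f (ρ x) from this]
    · refine ⟨Oᶜ, hOclosed.isOpen_compl, hx, ?_⟩
      intro y hy
      rw [Set.indicator_of_notMem hy, Set.indicator_of_notMem hx]
  · apply HasCompactSupport.intro (S.isCompact_setMul hTop hf.2 hC.1)
    intro x hx
    by_contra hne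
    apply hx
    have hxO : x ∈ O := by
      by_contra hxO
      rw [Set.indicator_of_notMem hxO] at hne
      exact hne rfl
    rw [Set.indicator_of_mem hxO] at hne
    have hfρ : f (ρ x) ≠ 0 := left_ne_zero_of_mul hne
    set β := S.secd C (S.d x) with hβ
    obtain ⟨hβC, hβd⟩ := S.secd_mem hxO
    have hc1 : S.d x = S.r (S.inv β) := S.comp_inv_right hβd.symm
    have hc2 : S.d (ρ x) = S.r β := by
      rw [hρ]
      show S.d (S.mul x (S.inv β)) = S.r β
      rw [S.d_mul hc1, S.d_inv]
    have hmul : S.mul (ρ x) β = x := by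
      rw [hρ]
      show S.mul (S.mul x (S.inv β)) β = x
      rw [S.assoc' hc1 (S.d_inv β)]
      show S.mul x (S.d β) = x
      rw [hβd]
      exact S.mul_unit rfl
    exact ⟨ρ x, subset_tsupport f hfρ, β, hβC, hc2, hmul.symm⟩

lemma conv_mem_SteinSet (hTop : S.IsTopological) (hAmple : S.IsAmple) {f g : G → R}
    (hf : f ∈ S.SteinSet R) (hg : g ∈ S.SteinSet R) : S.conv f g ∈ S.SteinSet R := by
  obtain ⟨n, Bs, hBs, hcov⟩ := S.exists_bisection_cover hAmple hf
  have hinj : ∀ i, Set.InjOn S.r (Bs i) := fun i => (hBs i).2.2.2.1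
  have hspan := S.mem_span_of_SteinSet hAmple hg
  refine Submodule.span_induction
    (p := fun g' _ => S.conv f g' ∈ S.SteinSet R) ?_ ?_ ?_ ?_ hspan
  · rintro g' ⟨B, hB, -, rfl⟩
    exact S.conv_indicator_right_mem_SteinSet hTop hB hf 1
  · show S.conv f 0 ∈ S.SteinSet R
    rw [S.conv_zero_right]
    exact S.SteinSet_zero
  · rintro g₁ g₂ - - h1 h2
    show S.conv f (g₁ + g₂) ∈ S.SteinSet R
    rw [S.conv_add_right Bs hinj hcov]
    exact S.SteinSet_add h1 h2
  · rintro a g' - h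
    show S.conv f (a • g') ∈ S.SteinSet R
    rw [S.conv_smul_right a Bs hinj hcov]
    exact S.SteinSet_smul h a

end ConvClosure

section IdealLemmas

variable [TopologicalSpace G] {R : Type*} [CommRing R] [T2Space G]

lemma isClosed_cfiber {Γ : Type*} (c : G → Γ) (hc : ∀ γ : Γ, IsOpen (c ⁻¹' {γ}))
    (γ : Γ) : IsClosed (c ⁻¹' {γ}) := by
  rw [← isOpen_compl_iff, isOpen_iff_forall_mem_open]
  intro y hy
  refine ⟨c ⁻¹' {c y}, ?_, hc _, rfl⟩
  intro z hz
  simp only [mem_compl_iff, mem_preimage, mem_singleton_iff] at *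
  rw [hz]; exact hy

lemma idealOf_isIdeal (hTop : S.IsTopological) (hAmple : S.IsAmple) {U : Set G}
    (hinv : S.IsInvariant U) : S.IsIdealOf (S.idealOf R U) := by
  refine ⟨fun f hf => ((S.mem_idealOf_iff hAmple).1 hf).1, ?_, ?_, ?_⟩
  · exact (S.mem_idealOf_iff hAmple).2 ⟨S.SteinSet_zero, fun x hx => absurd rfl hx⟩
  · intro f hf g hg
    rw [S.mem_idealOf_iff hAmple] at *
    refine ⟨S.SteinSet_sub hf.1 hg.1, ?_⟩
    intro x hx
    by_cases hfx : f x = 0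
    · refine hg.2 x ?_
      intro hgx
      exact hx (by show f x - g x = 0; rw [hfx, hgx, sub_zero])
    · exact hf.2 x hfx
  · intro f hf g hg
    rw [S.mem_idealOf_iff hAmple] at hf
    constructor
    · rw [S.mem_idealOf_iff hAmple]
      refine ⟨S.conv_mem_SteinSet hTop hAmple hf.1 hg, ?_⟩
      intro x hx
      obtain ⟨p, ⟨hcomp, hmul⟩, hf1, hg1⟩ := S.conv_nonzero_witness hx
      have hdα : S.d p.1 ∈ U := hf.2 _ hf1
      have hdβ : S.r (S.inv p.2) ∈ U := by
        apply hinv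
        rw [S.d_inv, ← hcomp]
        exact hdα
      rw [S.r_inv] at hdβ
      rw [← hmul, S.d_mul hcomp]
      exact hdβ
    · rw [S.mem_idealOf_iff hAmple]
      refine ⟨S.conv_mem_SteinSet hTop hAmple hg hf.1, ?_⟩
      intro x hx
      obtain ⟨p, ⟨hcomp, hmul⟩, hg1, hf1⟩ := S.conv_nonzero_witness hx
      rw [← hmul, S.d_mul hcomp]
      exact hf.2 _ hf1

lemma idealOf_isGraded (hTop : S.IsTopological) (hAmple : S.IsAmple) {U : Set G}
    (hinv : S.IsInvariant U) {Γ : Type*} (c : G → Γ)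
    (hc : ∀ γ : Γ, IsOpen (c ⁻¹' {γ})) :
    S.IsGradedIdealOf c (S.idealOf R U) := by
  refine ⟨S.idealOf_isIdeal hTop hAmple hinv, ?_⟩
  intro f hf γ
  rw [S.mem_idealOf_iff hAmple] at *
  constructor
  · exact S.SteinSet_indicator (hc γ) (isClosed_cfiber c hc γ) hf.1
  · intro x hx
    refine hf.2 x ?_
    intro hfx
    apply hx
    by_cases hxc : x ∈ {y : G | c y = γ}
    · rw [Set.indicator_of_mem hxc, hfx]
    · rw [Set.indicator_of_notMem hxc]

lemma exists_unit_bisection (hTop : S.IsTopological) (hAmple : S.IsAmple) {U : Set G}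
    (hU : S.IsRelOpen U) {u : G} (hu : u ∈ U) :
    ∃ B : Set G, S.IsCompactOpenBisection B ∧ u ∈ B ∧ B ⊆ S.unitSpace ∧
      S.d '' B ⊆ U := by
  obtain ⟨hUsub, W, hW, hUW⟩ := hU
  have huW : u ∈ W ∩ S.unitSpace := by rw [← hUW]; exact hu
  obtain ⟨B, huB, hBsub, hBc, hBbis⟩ := hAmple u (W ∩ S.unitSpace) huW
    (hW.inter (S.isOpen_unitSpace hTop hAmple))
  refine ⟨B, ⟨hBc, hBbis⟩, huB, fun x hx => (hBsub hx).2, ?_⟩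
  rintro v ⟨x, hx, rfl⟩
  rw [S.unit_d (hBsub hx).2, hUW]
  exact hBsub hx

/-- the unit set recovered from an ideal -/
def UOf (I : Set (G → R)) : Set G :=
  {u : G | u ∈ S.unitSpace ∧ ∃ f ∈ I, f u ≠ 0}

lemma recovery [Nontrivial R] (hTop : S.IsTopological) (hAmple : S.IsAmple) {U : Set G}
    (hU : S.IsRelOpen U) : U = S.UOf (S.idealOf R U) := by
  ext u
  constructor
  · intro hu
    obtain ⟨B, hB, huB, hBunit, hBU⟩ := S.exists_unit_bisection hTop hAmple hU hu
    refine ⟨hU.1 hu, B.indicator (fun _ => (1 : R)), ?_, ?_⟩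
    · exact Submodule.subset_span ⟨B, hB, hBU, rfl⟩
    · rw [Set.indicator_of_mem huB]
      exact one_ne_zero
  · rintro ⟨huG, f, hf, hfu⟩
    have := ((S.mem_idealOf_iff hAmple).1 hf).2 u hfu
    rwa [S.unit_d huG] at this

lemma inj_d_inv_image {B : Set G} (hB : Set.InjOn S.r B) :
    Set.InjOn S.d (S.inv '' B) := by
  rintro x ⟨b1, hb1, rfl⟩ y ⟨b2, hb2, rfl⟩ h
  rw [S.d_inv, S.d_inv] at h
  rw [hB hb1 hb2 h]

lemma inj_r_inv_image {B : Set G} (hB : Set.InjOn S.d B) :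
    Set.InjOn S.r (S.inv '' B) := by
  rintro x ⟨b1, hb1, rfl⟩ y ⟨b2, hb2, rfl⟩ h
  rw [S.r_inv, S.r_inv] at h
  rw [hB hb1 hb2 h]

lemma d_mem_UOf_of_ne_zero (hTop : S.IsTopological) (hAmple : S.IsAmple)
    {I : Set (G → R)} (hI : S.IsIdealOf I) {f : G → R} (hf : f ∈ I) {x : G}
    (hx : f x ≠ 0) : S.d x ∈ S.UOf I := by
  obtain ⟨B, hxB, -, hBc, hBbis⟩ := hAmple x univ (mem_univ x) isOpen_univ
  set B' := S.inv '' B with hB'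
  have hB'rinj : Set.InjOn S.r B' := S.inj_r_inv_image hBbis.2.1
  have hB'stein : B'.indicator (fun _ => (1 : R)) ∈ S.SteinSet R :=
    S.indicator_const_mem_SteinSet (S.isCompact_inv_image hTop hBc)
      (S.isOpen_inv_image hTop hBbis.1) 1
  set g := S.conv (B'.indicator fun _ => (1 : R)) f with hg
  have hgI : g ∈ I := (hI.2.2.2 f hf _ hB'stein).2
  refine ⟨S.d_mem_unitSpace x, g, hgI, ?_⟩
  rw [hg, S.conv_indicator_left hB'rinj f 1]
  have hmem : S.d x ∈ S.r ⁻¹' (S.r '' B') := by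
    show S.r (S.d x) ∈ S.r '' B'
    rw [S.r_d]
    exact ⟨S.inv x, ⟨x, hxB, rfl⟩, S.r_inv x⟩
  rw [Set.indicator_of_mem hmem, one_mul, S.r_d x]
  have hsecr : S.secr B' (S.d x) = S.inv x := by
    rw [← S.r_inv x]
    exact S.secr_eq hB'rinj ⟨x, hxB, rfl⟩
  rw [hsecr, S.inv_inv, S.mul_d']
  exact hx

lemma subset_idealOf_UOf (hTop : S.IsTopological) (hAmple : S.IsAmple)
    {I : Set (G → R)} (hI : S.IsIdealOf I) : I ⊆ S.idealOf R (S.UOf I) := by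
  intro f hf
  rw [S.mem_idealOf_iff hAmple]
  exact ⟨hI.1 hf, fun x hx => S.d_mem_UOf_of_ne_zero hTop hAmple hI hf hx⟩

lemma UOf_relOpen {I : Set (G → R)} (hI : I ⊆ S.SteinSet R) :
    S.IsRelOpen (S.UOf I) := by
  refine ⟨fun u hu => hu.1, ⟨⋃ f : I, support (f : G → R), ?_, ?_⟩⟩
  · exact isOpen_iUnion fun f => S.isOpen_support_of_SteinSet (hI f.2)
  · ext u
    constructor
    · rintro ⟨huG, f, hf, hfu⟩
      exact ⟨mem_iUnion.2 ⟨⟨f, hf⟩, hfu⟩, huG⟩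
    · rintro ⟨hW, huG⟩
      obtain ⟨f, hf⟩ := mem_iUnion.1 hW
      exact ⟨huG, f.1, f.2, hf⟩

lemma UOf_invariant (hTop : S.IsTopological) (hAmple : S.IsAmple)
    {I : Set (G → R)} (hI : S.IsIdealOf I) : S.IsInvariant (S.UOf I) := by
  intro γ hγ
  obtain ⟨-, f, hf, hfd⟩ := hγ
  obtain ⟨B, hγB, -, hBc, hBbis⟩ := hAmple γ univ (mem_univ γ) isOpen_univ
  set B' := S.inv '' B with hB'def
  have hB'dinj : Set.InjOn S.d B' := S.inj_d_inv_image hBbis.2.2.1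
  have hB'stein : B'.indicator (fun _ => (1 : R)) ∈ S.SteinSet R :=
    S.indicator_const_mem_SteinSet (S.isCompact_inv_image hTop hBc)
      (S.isOpen_inv_image hTop hBbis.1) 1
  have hBstein : B.indicator (fun _ => (1 : R)) ∈ S.SteinSet R :=
    S.indicator_const_mem_SteinSet hBc hBbis.1 1
  set h := S.conv f (B'.indicator fun _ => (1 : R)) with hh
  have hhI : h ∈ I := (hI.2.2.2 f hf _ hB'stein).1
  set g := S.conv (B.indicator fun _ => (1 : R)) h with hg
  have hgI : g ∈ I := (hI.2.2.2 h hhI _ hBstein).2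
  refine ⟨S.r_mem_unitSpace γ, g, hgI, ?_⟩
  -- evaluate g at r γ
  rw [hg, S.conv_indicator_left hBbis.2.2.1 h 1]
  have hmem : S.r γ ∈ S.r ⁻¹' (S.r '' B) := by
    show S.r (S.r γ) ∈ S.r '' B
    rw [S.r_r]
    exact ⟨γ, hγB, rfl⟩
  rw [Set.indicator_of_mem hmem, one_mul]
  have hsecr : S.secr B (S.r (S.r γ)) = γ := by
    rw [S.r_r]
    exact S.secr_eq hBbis.2.2.1 hγB
  rw [hsecr]
  have harg : S.mul (S.inv γ) (S.r γ) = S.inv γ := S.mul_unit (S.d_inv γ)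
  rw [harg]
  -- now evaluate h at inv γ
  rw [hh, S.conv_indicator_right hB'dinj f 1]
  have hmem2 : S.inv γ ∈ S.d ⁻¹' (S.d '' B') := by
    show S.d (S.inv γ) ∈ S.d '' B'
    exact ⟨S.inv γ, ⟨γ, hγB, rfl⟩, rfl⟩
  rw [Set.indicator_of_mem hmem2, mul_one]
  have hsecd : S.secd B' (S.d (S.inv γ)) = S.inv γ :=
    S.secd_eq hB'dinj ⟨γ, hγB, rfl⟩
  rw [hsecd, S.inv_inv]
  have : S.mul (S.inv γ) γ = S.d γ := rfl
  rw [this]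
  exact hfd

end IdealLemmas

section UnitSets

variable [TopologicalSpace G] {R : Type*} [CommRing R] [T2Space G]

lemma injOn_d_units {V : Set G} (hV : V ⊆ S.unitSpace) : Set.InjOn S.d V := by
  intro a ha b hb h
  rw [← S.unit_d (hV ha), h, S.unit_d (hV hb)]

lemma injOn_r_units {V : Set G} (hV : V ⊆ S.unitSpace) : Set.InjOn S.r V := by
  intro a ha b hb h
  rw [← S.unit_r (hV ha), h, S.unit_r (hV hb)]

lemma d_image_units {V : Set G} (hV : V ⊆ S.unitSpace) : S.d '' V = V := by
  ext x
  constructor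
  · rintro ⟨v, hv, rfl⟩; rwa [S.unit_d (hV hv)]
  · intro hx; exact ⟨x, hx, S.unit_d (hV hx)⟩

lemma r_image_units {V : Set G} (hV : V ⊆ S.unitSpace) : S.r '' V = V := by
  ext x
  constructor
  · rintro ⟨v, hv, rfl⟩; rwa [S.unit_r (hV hv)]
  · intro hx; exact ⟨x, hx, S.unit_r (hV hx)⟩

lemma isOpenBisection_units {V : Set G} (hV : V ⊆ S.unitSpace) (hVo : IsOpen V) :
    S.IsOpenBisection V := by
  refine ⟨hVo, S.injOn_d_units hV, S.injOn_r_units hV, ?_, ?_⟩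
  · intro W hW hWo; rwa [S.d_image_units (hW.trans hV)]
  · intro W hW hWo; rwa [S.r_image_units (hW.trans hV)]

lemma conv_unit_indicator_left {V : Set G} (hV : V ⊆ S.unitSpace) (g : G → R) (b : R) :
    S.conv (V.indicator fun _ => b) g =
      (S.r ⁻¹' V).indicator (fun x => b * g x) := by
  rw [S.conv_indicator_left (S.injOn_r_units hV) g b]
  funext x
  by_cases hr : S.r x ∈ V
  · have hmem : x ∈ S.r ⁻¹' (S.r '' V) := by
      rw [S.r_image_units hV]; exact hr
    rw [Set.indicator_of_mem hmem, Set.indicator_of_mem (show x ∈ S.r ⁻¹' V from hr)]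
    have hsecr : S.secr V (S.r x) = S.r x := by
      conv_lhs => rw [← S.r_r x]
      exact S.secr_eq (S.injOn_r_units hV) hr
    rw [hsecr, S.inv_r, S.r_mul']
  · have hmem : x ∉ S.r ⁻¹' (S.r '' V) := by
      rw [S.r_image_units hV]; exact hr
    rw [Set.indicator_of_notMem hmem,
      Set.indicator_of_notMem (show x ∉ S.r ⁻¹' V from hr)]

lemma conv_unit_indicator_right {V : Set G} (hV : V ⊆ S.unitSpace) (g : G → R) (b : R) :
    S.conv g (V.indicator fun _ => b) =
      (S.d ⁻¹' V).indicator (fun x => g x * b) := by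
  rw [S.conv_indicator_right (S.injOn_d_units hV) g b]
  funext x
  by_cases hd : S.d x ∈ V
  · have hmem : x ∈ S.d ⁻¹' (S.d '' V) := by
      rw [S.d_image_units hV]; exact hd
    rw [Set.indicator_of_mem hmem, Set.indicator_of_mem (show x ∈ S.d ⁻¹' V from hd)]
    have hsecd : S.secd V (S.d x) = S.d x := by
      conv_lhs => rw [← S.d_d x]
      exact S.secd_eq (S.injOn_d_units hV) hd
    rw [hsecd, S.inv_d, S.mul_d']
  · have hmem : x ∉ S.d ⁻¹' (S.d '' V) := by
      rw [S.d_image_units hV]; exact hd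
    rw [Set.indicator_of_notMem hmem,
      Set.indicator_of_notMem (show x ∉ S.d ⁻¹' V from hd)]

lemma ideal_add {I : Set (G → R)} (hI : S.IsIdealOf I) {f g : G → R}
    (hf : f ∈ I) (hg : g ∈ I) : f + g ∈ I := by
  have h0 : (0 : G → R) - g ∈ I := hI.2.2.1 0 hI.2.1 g hg
  have := hI.2.2.1 f hf _ h0
  have heq : f - (0 - g) = f + g := by funext x; simp
  rwa [heq] at this

lemma exists_compactOpen_unit_cover (hTop : S.IsTopological) (hAmple : S.IsAmple)
    {K : Set G} (hK : IsCompact K) (hsub : K ⊆ S.unitSpace) :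
    ∃ W : Set G, IsCompact W ∧ IsOpen W ∧ W ⊆ S.unitSpace ∧ K ⊆ W := by
  classical
  by_cases hKne : K = ∅
  · exact ⟨∅, isCompact_empty, isOpen_empty, empty_subset _, by rw [hKne]⟩
  have hopen := S.isOpen_unitSpace hTop hAmple
  set B : K → Set G := fun x => (hAmple x.1 S.unitSpace (hsub x.2) hopen).choose with hBdef
  have hB : ∀ x : K, x.1 ∈ B x ∧ B x ⊆ S.unitSpace ∧ IsCompact (B x) ∧ IsOpen (B x) := by
    intro x
    have h := (hAmple x.1 S.unitSpace (hsub x.2) hopen).choose_spec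
    exact ⟨h.1, h.2.1, h.2.2.1, h.2.2.2.1⟩
  obtain ⟨t, ht⟩ := hK.elim_finite_subcover B (fun x => (hB x).2.2.2)
    (fun y hy => mem_iUnion.2 ⟨⟨y, hy⟩, (hB ⟨y, hy⟩).1⟩)
  refine ⟨⋃ x ∈ t, B x, t.isCompact_biUnion (fun x _ => (hB x).2.2.1),
    isOpen_biUnion (fun x _ => (hB x).2.2.2), ?_, ht⟩
  intro y hy
  obtain ⟨x, -, hyx⟩ := by rwa [mem_iUnion₂] at hy
  exact (hB x).2.1 hyx

lemma ideal_smul (hTop : S.IsTopological) (hAmple : S.IsAmple) {I : Set (G → R)}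
    (hI : S.IsIdealOf I) (a : R) {f : G → R} (hf : f ∈ I) : a • f ∈ I := by
  have hfs := hI.1 hf
  have hKc : IsCompact (S.r '' support f) :=
    (S.isCompact_support_of_SteinSet hfs).image (S.continuous_r hTop)
  have hKsub : S.r '' support f ⊆ S.unitSpace := by
    rintro v ⟨x, -, rfl⟩; exact S.r_mem_unitSpace x
  obtain ⟨W, hWc, hWo, hWu, hWK⟩ := S.exists_compactOpen_unit_cover hTop hAmple hKc hKsub
  have heq : a • f = S.conv (W.indicator fun _ => a) f := by
    rw [S.conv_unit_indicator_left hWu f a]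
    funext x
    by_cases hfx : f x = 0
    · show a * f x = _
      rw [hfx, mul_zero]
      by_cases hr : S.r x ∈ W
      · rw [Set.indicator_of_mem (show x ∈ S.r ⁻¹' W from hr), hfx, mul_zero]
      · rw [Set.indicator_of_notMem (show x ∉ S.r ⁻¹' W from hr)]
    · have hr : S.r x ∈ W := hWK ⟨x, hfx, rfl⟩
      rw [Set.indicator_of_mem (show x ∈ S.r ⁻¹' W from hr)]
      rfl
  rw [heq]
  exact (hI.2.2.2 f hf _ (S.indicator_const_mem_SteinSet hWc hWo a)).2

lemma conv_unit_indicators {V W : Set G} (hV : V ⊆ S.unitSpace) (hW : W ⊆ S.unitSpace) :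
    S.conv (V.indicator fun _ => (1 : R)) (W.indicator fun _ => (1 : R)) =
      (V ∩ W).indicator fun _ => (1 : R) := by
  rw [S.conv_unit_indicator_left hV _ 1]
  funext x
  by_cases hxW : x ∈ W
  · have hx : S.r x = x := S.unit_r (hW hxW)
    by_cases hxV : x ∈ V
    · rw [Set.indicator_of_mem (show x ∈ S.r ⁻¹' V by rw [mem_preimage, hx]; exact hxV),
        Set.indicator_of_mem hxW, Set.indicator_of_mem (show x ∈ V ∩ W from ⟨hxV, hxW⟩), one_mul]
    · rw [Set.indicator_of_notMem
        (show x ∉ S.r ⁻¹' V by rw [mem_preimage, hx]; exact hxV),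
        Set.indicator_of_notMem (fun h : x ∈ V ∩ W => hxV h.1)]
  · have h0 : W.indicator (fun _ => (1:R)) x = 0 := Set.indicator_of_notMem hxW _
    rw [Set.indicator_of_notMem (fun h : x ∈ V ∩ W => hxW h.2)]
    by_cases hr : S.r x ∈ V
    · rw [Set.indicator_of_mem (show x ∈ S.r ⁻¹' V from hr), h0, mul_zero]
    · rw [Set.indicator_of_notMem (show x ∉ S.r ⁻¹' V from hr)]

lemma union_unit_indicator_mem (hTop : S.IsTopological) (hAmple : S.IsAmple)
    {I : Set (G → R)} (hI : S.IsIdealOf I) :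
    ∀ L : List (Set G), (∀ V ∈ L, IsCompact V ∧ IsOpen V ∧ V ⊆ S.unitSpace ∧
      V.indicator (fun _ => (1 : R)) ∈ I) →
    IsCompact (⋃ V ∈ L, V) ∧ IsOpen (⋃ V ∈ L, V) ∧ (⋃ V ∈ L, V) ⊆ S.unitSpace ∧
      (⋃ V ∈ L, V).indicator (fun _ => (1 : R)) ∈ I := by
  intro L
  induction L with
  | nil =>
    intro _
    have : (⋃ V ∈ ([] : List (Set G)), V) = (∅ : Set G) := by simp
    rw [this]
    exact ⟨isCompact_empty, isOpen_empty, empty_subset _,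
      by rw [Set.indicator_empty]; exact hI.2.1⟩
  | cons B L ih =>
    intro hL
    have hB := hL B List.mem_cons_self
    have hL' := ih (fun V hV => hL V (List.mem_cons_of_mem B hV))
    have hunion : (⋃ V ∈ (B :: L : List (Set G)), V) = B ∪ ⋃ V ∈ L, V := by
      ext x; simp [List.mem_cons, or_and_right, exists_or]
    rw [hunion]
    set W := ⋃ V ∈ L, V with hWdef
    refine ⟨hB.1.union hL'.1, hB.2.1.union hL'.2.1, union_subset hB.2.2.1 hL'.2.2.1, ?_⟩
    have hBW : (B ∩ W).indicator (fun _ => (1 : R)) ∈ I := by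
      rw [← S.conv_unit_indicators hB.2.2.1 hL'.2.2.1]
      exact (hI.2.2.2 _ hL'.2.2.2 _
        (S.indicator_const_mem_SteinSet hB.1 hB.2.1 1)).2
    have heq : (B ∪ W).indicator (fun _ => (1 : R)) =
        B.indicator (fun _ => (1:R)) + W.indicator (fun _ => (1:R)) -
          (B ∩ W).indicator (fun _ => (1:R)) := by
      funext x
      show _ = B.indicator (fun _ => (1:R)) x + W.indicator (fun _ => (1:R)) x -
          (B ∩ W).indicator (fun _ => (1:R)) x
      by_cases hxB : x ∈ B <;> by_cases hxW : x ∈ W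
      · rw [Set.indicator_of_mem (show x ∈ B ∪ W from Or.inl hxB), Set.indicator_of_mem hxB,
          Set.indicator_of_mem hxW, Set.indicator_of_mem (show x ∈ B ∩ W from ⟨hxB, hxW⟩)]
        ring
      · rw [Set.indicator_of_mem (show x ∈ B ∪ W from Or.inl hxB), Set.indicator_of_mem hxB,
          Set.indicator_of_notMem hxW, Set.indicator_of_notMem
            (fun h : x ∈ B ∩ W => hxW h.2)]
        ring
      · rw [Set.indicator_of_mem (show x ∈ B ∪ W from Or.inr hxW), Set.indicator_of_mem hxW,
          Set.indicator_of_notMem hxB, Set.indicator_of_notMem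
            (fun h : x ∈ B ∩ W => hxB h.1)]
        ring
      · rw [Set.indicator_of_notMem (fun h : x ∈ B ∪ W => h.elim hxB hxW),
          Set.indicator_of_notMem hxB, Set.indicator_of_notMem hxW,
          Set.indicator_of_notMem (fun h : x ∈ B ∩ W => hxB h.1)]
        ring
    rw [heq]
    exact hI.2.2.1 _ (S.ideal_add hI hB.2.2.2 hL'.2.2.2) _ hBW

end UnitSets

section Shrink

variable [TopologicalSpace G] [T2Space G]

lemma mem_orbit_self {u : G} (hu : u ∈ S.unitSpace) : u ∈ S.orbit u :=
  ⟨u, S.unit_d hu, S.unit_r hu⟩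

lemma orbit_subset_unitSpace (u : G) : S.orbit u ⊆ S.unitSpace := by
  rintro v ⟨γ, -, rfl⟩; exact S.r_mem_unitSpace γ

lemma closure_orbit_invariant (hTop : S.IsTopological) (hAmple : S.IsAmple) (u : G) :
    S.IsInvariant (closure (S.orbit u)) := by
  intro γ hd
  rw [mem_closure_iff]
  intro N hN hrN
  obtain ⟨B, hγB, -, hBc, hBbis⟩ := hAmple γ univ (mem_univ γ) isOpen_univ
  have hdBopen : IsOpen (S.d '' B) := hBbis.2.2.2.1 B subset_rfl hBbis.1
  set τ : G → G := fun v => S.r (S.secd B v) with hτ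
  have hτcont : ContinuousOn τ (S.d '' B) :=
    (S.continuous_r hTop).comp_continuousOn (S.continuousOn_secd hBbis)
  have hdγ : S.d γ ∈ S.d '' B := ⟨γ, hγB, rfl⟩
  have hτdγ : τ (S.d γ) = S.r γ := by
    rw [hτ]
    show S.r (S.secd B (S.d γ)) = S.r γ
    rw [S.secd_eq hBbis.2.1 hγB]
  obtain ⟨u', hu', hdu', hsubτ⟩ := (continuousOn_iff.1 hτcont) (S.d γ) hdγ N hN
    (by rw [hτdγ]; exact hrN)
  have hopen : IsOpen (u' ∩ S.d '' B) := hu'.inter hdBopen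
  obtain ⟨v, hvN, hvO⟩ := (mem_closure_iff.1 hd) _ hopen ⟨hdu', hdγ⟩
  refine ⟨τ v, hsubτ hvN, ?_⟩
  obtain ⟨δ, hδd, rfl⟩ := hvO
  set x := S.secd B (S.r δ) with hx
  obtain ⟨hxB, hxd⟩ := S.secd_mem hvN.2
  refine ⟨S.mul x δ, ?_, ?_⟩
  · show S.d (S.mul x δ) = u
    rw [S.d_mul hxd, hδd]
  · show S.r (S.mul x δ) = τ (S.r δ)
    rw [S.r_mul_eq hxd]

lemma shrink_step (hSE : S.IsStronglyEffectiveOn H)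
    (D : Set G) (hD1 : D ⊆ S.unitSpace) (hD2 : D.Nonempty)
    (hD3 : ∃ C : Set G, IsClosed C ∧ D = C ∩ S.unitSpace)
    (hD4 : ∀ γ ∈ H, S.d γ ∈ D → S.r γ ∈ D)
    (hTop : S.IsTopological) {B₁ : Set G} (hB₁ : S.IsCompactOpenBisection B₁)
    (hB₁H : B₁ ⊆ H) (hB₁u : B₁ ∩ S.unitSpace = ∅)
    {V₀ : Set G} (hV₀ : IsOpen V₀) (hne : (V₀ ∩ D).Nonempty) :
    ∃ V : Set G, IsOpen V ∧ V ⊆ V₀ ∧ (V ∩ D).Nonempty ∧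
      ∀ x ∈ B₁, ¬(S.d x ∈ V ∧ S.r x ∈ V) := by
  have hdBc : IsCompact (S.d '' B₁) := hB₁.1.image (S.continuous_d hTop)
  have hdBo : IsOpen (S.d '' B₁) := hB₁.2.2.2.2.1 B₁ subset_rfl hB₁.2.1
  set τ : G → G := fun v => S.r (S.secd B₁ v) with hτ
  have hτcont : ContinuousOn τ (S.d '' B₁) :=
    (S.continuous_r hTop).comp_continuousOn (S.continuousOn_secd hB₁.2)
  by_cases h1 : ∃ v ∈ V₀ ∩ D, v ∉ S.d '' B₁
  · obtain ⟨v, hv, hvB⟩ := h1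
    refine ⟨V₀ \ S.d '' B₁, hV₀.sdiff hdBc.isClosed, diff_subset, ⟨v, ⟨hv.1, hvB⟩, hv.2⟩, ?_⟩
    rintro x hx ⟨hdx, -⟩
    exact hdx.2 ⟨x, hx, rfl⟩
  · push_neg at h1
    by_cases h2 : ∃ v ∈ V₀ ∩ D, τ v ≠ v
    · obtain ⟨v, hv, hτv⟩ := h2
      have hvB : v ∈ S.d '' B₁ := h1 v hv
      obtain ⟨Q, P, hQ, hP, hτvQ, hvP, hdisj⟩ := t2_separation hτv
      set W := S.d '' B₁ ∩ τ ⁻¹' Q with hW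
      have hWopen : IsOpen W := hτcont.isOpen_inter_preimage hdBo hQ
      refine ⟨V₀ ∩ P ∩ (W ∪ (S.d '' B₁)ᶜ), ?_, ?_, ⟨v, ?_, hv.2⟩, ?_⟩
      · exact (hV₀.inter hP).inter (hWopen.union hdBc.isClosed.isOpen_compl)
      · intro y hy; exact hy.1.1
      · exact ⟨⟨hv.1, hvP⟩, Or.inl ⟨hvB, hτvQ⟩⟩
      · rintro x hx ⟨hdx, hrx⟩
        have hdxB : S.d x ∈ S.d '' B₁ := ⟨x, hx, rfl⟩
        have hdxW : S.d x ∈ W := by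
          rcases hdx.2 with h | h
          · exact h
          · exact absurd hdxB h
        have hτdx : τ (S.d x) = S.r x := by
          show S.r (S.secd B₁ (S.d x)) = S.r x
          rw [S.secd_eq hB₁.2.2.1 hx]
        have hrxQ : S.r x ∈ Q := by rw [← hτdx]; exact hdxW.2
        have hrxP : S.r x ∈ P := hrx.1.2
        exact (Set.disjoint_iff.1 hdisj) ⟨hrxQ, hrxP⟩
    · push_neg at h2
      exfalso
      obtain ⟨v, hv⟩ := hne
      have hvB : v ∈ S.d '' B₁ := h1 v hv
      set x := S.secd B₁ v with hxdef
      obtain ⟨hxB, hxd⟩ := S.secd_mem hvB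
      have hrx : S.r x = v := h2 v hv
      have hxIso : x ∈ S.IsoSet := by
        show S.d x = S.r x
        rw [hxd, hrx]
      have hxmem : x ∈ H ∩ S.restrictG D := by
        refine ⟨hB₁H hxB, ?_, ?_⟩
        · rw [hxd]; exact hv.2
        · rw [hrx]; exact hv.2
      have hrel : x ∈ S.relInt (H ∩ S.restrictG D) (S.IsoSet ∩ (H ∩ S.restrictG D)) := by
        refine ⟨hxmem, B₁ ∩ S.d ⁻¹' V₀, hB₁.2.1.inter (hV₀.preimage (S.continuous_d hTop)),
          ⟨hxB, by rw [mem_preimage, hxd]; exact hv.1⟩, ?_⟩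
        rintro y ⟨⟨hyB₁, hydV₀⟩, hyH, hyD⟩
        refine ⟨?_, hyH, hyD⟩
        show S.d y = S.r y
        have h3 : τ (S.d y) = S.d y := h2 (S.d y) ⟨hydV₀, hyD.1⟩
        have h4 : τ (S.d y) = S.r y := by
          show S.r (S.secd B₁ (S.d y)) = S.r y
          rw [S.secd_eq hB₁.2.2.1 hyB₁]
        rw [← h4, h3]
      rw [hSE D hD1 hD2 hD3 hD4] at hrel
      have : x ∈ B₁ ∩ S.unitSpace := ⟨hxB, hD1 hrel⟩
      rw [hB₁u] at this
      exact this

lemma shrink_list (hSE : S.IsStronglyEffectiveOn H)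
    (D : Set G) (hD1 : D ⊆ S.unitSpace) (hD2 : D.Nonempty)
    (hD3 : ∃ C : Set G, IsClosed C ∧ D = C ∩ S.unitSpace)
    (hD4 : ∀ γ ∈ H, S.d γ ∈ D → S.r γ ∈ D)
    (hTop : S.IsTopological) :
    ∀ L : List (Set G), (∀ B₁ ∈ L, S.IsCompactOpenBisection B₁ ∧ B₁ ⊆ H ∧
      B₁ ∩ S.unitSpace = ∅) →
    ∀ V₀ : Set G, IsOpen V₀ → (V₀ ∩ D).Nonempty →
    ∃ V : Set G, IsOpen V ∧ V ⊆ V₀ ∧ (V ∩ D).Nonempty ∧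
      ∀ B₁ ∈ L, ∀ x ∈ B₁, ¬(S.d x ∈ V ∧ S.r x ∈ V) := by
  intro L
  induction L with
  | nil =>
    intro _ V₀ hV₀ hne
    exact ⟨V₀, hV₀, subset_rfl, hne, fun B₁ hB₁ => absurd hB₁ List.not_mem_nil⟩
  | cons B L ih =>
    intro hL V₀ hV₀ hne
    have hB := hL B List.mem_cons_self
    obtain ⟨V₁, hV₁o, hV₁sub, hV₁ne, hV₁cond⟩ :=
      S.shrink_step hSE D hD1 hD2 hD3 hD4 hTop hB.1 hB.2.1 hB.2.2 hV₀ hne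
    obtain ⟨V, hVo, hVsub, hVne, hVcond⟩ :=
      ih (fun B₁ hB₁ => hL B₁ (List.mem_cons_of_mem B hB₁)) V₁ hV₁o hV₁ne
    refine ⟨V, hVo, hVsub.trans hV₁sub, hVne, ?_⟩
    intro B₁ hB₁ x hx
    rcases List.mem_cons.1 hB₁ with rfl | hmem
    · intro ⟨hd, hr⟩
      exact hV₁cond x hx ⟨hVsub hd, hVsub hr⟩
    · exact hVcond B₁ hmem x hx

lemma compact_cover_by_bisections (hAmple : S.IsAmple) {K W : Set G}
    (hK : IsCompact K) (hW : IsOpen W) (hsub : K ⊆ W) :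
    ∃ L : List (Set G), (∀ B ∈ L, S.IsCompactOpenBisection B ∧ B ⊆ W) ∧
      K ⊆ ⋃ B ∈ L, B := by
  classical
  set B : K → Set G := fun x => (hAmple x.1 W (hsub x.2) hW).choose with hBdef
  have hB : ∀ x : K, x.1 ∈ B x ∧ B x ⊆ W ∧ S.IsCompactOpenBisection (B x) := by
    intro x
    have h := (hAmple x.1 W (hsub x.2) hW).choose_spec
    exact ⟨h.1, h.2.1, h.2.2.1, h.2.2.2⟩
  obtain ⟨t, ht⟩ := hK.elim_finite_subcover B (fun x => (hB x).2.2.2.1)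
    (fun y hy => mem_iUnion.2 ⟨⟨y, hy⟩, (hB ⟨y, hy⟩).1⟩)
  refine ⟨t.toList.map B, ?_, ?_⟩
  · intro B' hB'
    obtain ⟨x, -, rfl⟩ := List.mem_map.1 hB'
    exact ⟨(hB x).2.2, (hB x).2.1⟩
  · intro y hy
    obtain ⟨x, hxt, hyx⟩ := by
      have := ht hy
      rwa [mem_iUnion₂] at this
    refine mem_iUnion₂.2 ⟨B x, ?_, hyx⟩
    exact List.mem_map.2 ⟨x, Finset.mem_toList.2 hxt, rfl⟩

end Shrink

section Extraction

variable [TopologicalSpace G] [T2Space G]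

lemma c_unit_one {Γ : Type*} [Group Γ] (c : G → Γ)
    (hc_mul : ∀ x y : G, S.d x = S.r y → c (S.mul x y) = c x * c y)
    {w : G} (hw : w ∈ S.unitSpace) : c w = 1 := by
  have hcomp : S.d w = S.r w := by rw [S.unit_d hw, S.unit_r hw]
  have hmulw : S.mul w w = w := S.unit_mul (S.unit_r hw)
  have h1 := hc_mul w w hcomp
  rw [hmulw] at h1
  have h2 : c w * 1 = c w * c w := by rw [mul_one, ← h1]
  exact (mul_left_cancel h2).symm

lemma exists_unit_indicator {Γ : Type*} [Group Γ] (hTop : S.IsTopological)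
    (hAmple : S.IsAmple) (c : G → Γ) (hc_cont : ∀ γ : Γ, IsOpen (c ⁻¹' {γ}))
    (hc_mul : ∀ x y : G, S.d x = S.r y → c (S.mul x y) = c x * c y)
    (hSE : S.IsStronglyEffectiveOn (c ⁻¹' {1}))
    {k : Type*} [Field k] {I : Set (G → k)}
    (hI : S.IsGradedIdealOf c I) {u : G} (hu : u ∈ S.unitSpace)
    {f0 : G → k} (hf0 : f0 ∈ I) (hne0 : f0 u ≠ 0) :
    ∃ V : Set G, IsCompact V ∧ IsOpen V ∧ V ⊆ S.unitSpace ∧ u ∈ V ∧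
      V.indicator (fun _ => (1 : k)) ∈ I := by
  set H : Set G := c ⁻¹' {1} with hHdef
  set f : G → k := ({x : G | c x = (1 : Γ)}).indicator f0 with hfdef
  have hfI : f ∈ I := hI.2 f0 hf0 1
  have hfs : f ∈ S.SteinSet k := hI.1.1 hfI
  have hfu : f u = f0 u :=
    Set.indicator_of_mem (show u ∈ {x : G | c x = 1} from S.c_unit_one c hc_mul hu) _
  set a : k := f u with hadef
  have ha : a ≠ 0 := by rw [hfu]; exact hne0
  have hsuppfH : support f ⊆ H := by
    intro x hx
    show c x ∈ ({1} : Set Γ)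
    rw [mem_singleton_iff]
    by_contra hc
    have hfx0 : f x = 0 := by
      rw [hfdef]
      have hxnot : x ∉ {y : G | c y = (1 : Γ)} := hc
      exact Set.indicator_of_notMem hxnot f0
    exact hx hfx0
  -- a compact open unit bisection B around u on which f is constantly a
  have hNopen : IsOpen (f ⁻¹' {a}) := hfs.1 _
  obtain ⟨B, huB, hBsub, hBc, hBbis⟩ := hAmple u (f ⁻¹' {a} ∩ S.unitSpace)
    ⟨rfl, hu⟩ (hNopen.inter (S.isOpen_unitSpace hTop hAmple))
  have hBunit : B ⊆ S.unitSpace := fun x hx => (hBsub hx).2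
  have hBval : ∀ x ∈ B, f x = a := fun x hx => (hBsub hx).1
  -- the error term h
  set h : G → k := f - a • B.indicator (fun _ => (1 : k)) with hhdef
  have hhs : h ∈ S.SteinSet k :=
    S.SteinSet_sub hfs (S.SteinSet_smul (S.indicator_const_mem_SteinSet hBc hBbis.1 1) a)
  have hhB : ∀ x ∈ B, h x = 0 := by
    intro x hx
    show f x - a * B.indicator (fun _ => (1:k)) x = 0
    rw [Set.indicator_of_mem hx, mul_one, hBval x hx, sub_self]
  have hhval : ∀ x, x ∉ B → h x = f x := by
    intro x hx
    show f x - a * B.indicator (fun _ => (1:k)) x = f x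
    rw [Set.indicator_of_notMem hx, mul_zero, sub_zero]
  have hsupph : support h ⊆ H := by
    intro x hx
    by_cases hxB : x ∈ B
    · exact absurd (hhB x hxB) hx
    · rw [mem_support, hhval x hxB] at hx
      exact hsuppfH hx
  -- the compact open set K of non-units in the support of h, covered by bisections
  set K : Set G := support h ∩ (S.unitSpace)ᶜ with hKdef
  have hKc : IsCompact K := (S.isCompact_support_of_SteinSet hhs).inter_right
    ((S.isOpen_unitSpace hTop hAmple).isClosed_compl)
  have hKsub : K ⊆ H ∩ (S.unitSpace)ᶜ := fun x hx => ⟨hsupph hx.1, hx.2⟩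
  have hHopen : IsOpen (H ∩ (S.unitSpace)ᶜ) :=
    (hc_cont 1).inter (S.isClosed_unitSpace hTop).isOpen_compl
  obtain ⟨L, hL, hLcov⟩ := S.compact_cover_by_bisections hAmple hKc hHopen hKsub
  -- the orbit closure D
  set D : Set G := closure (S.orbit u) with hDdef
  have hD1 : D ⊆ S.unitSpace :=
    closure_minimal (S.orbit_subset_unitSpace u) (S.isClosed_unitSpace hTop)
  have hDu : u ∈ D := subset_closure (S.mem_orbit_self hu)
  have hD2 : D.Nonempty := ⟨u, hDu⟩
  have hD3 : ∃ C : Set G, IsClosed C ∧ D = C ∩ S.unitSpace :=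
    ⟨D, isClosed_closure, (inter_eq_left.2 hD1).symm⟩
  have hD4full := S.closure_orbit_invariant hTop hAmple u
  have hD4 : ∀ γ ∈ H, S.d γ ∈ D → S.r γ ∈ D := fun γ _ hγ => hD4full γ hγ
  -- shrink
  obtain ⟨V', hV'o, hV'sub, hV'ne, hV'cond⟩ := S.shrink_list hSE D hD1 hD2 hD3 hD4 hTop L
    (fun B₁ hB₁ => ⟨(hL B₁ hB₁).1, fun x hx => ((hL B₁ hB₁).2 hx).1,
      eq_empty_iff_forall_notMem.2 (fun x hx => ((hL B₁ hB₁).2 hx.1).2 hx.2)⟩)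
    B hBbis.1 ⟨u, huB, hDu⟩
  -- pick an orbit point in V'
  obtain ⟨v', hv'V, hv'D⟩ := hV'ne
  obtain ⟨v, hvV', hvO⟩ := (mem_closure_iff.1 hv'D) V' hV'o hv'V
  obtain ⟨Vv, hvVv, hVvsub, hVvc, hVvbis⟩ := hAmple v V' hvV' hV'o
  have hVvB : Vv ⊆ B := hVvsub.trans hV'sub
  have hVvunit : Vv ⊆ S.unitSpace := hVvB.trans hBunit
  -- cutting down f to a multiple of the indicator of Vv
  have hg1I : S.conv f (Vv.indicator fun _ => a⁻¹) ∈ I :=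
    (hI.1.2.2.2 f hfI _ (S.indicator_const_mem_SteinSet hVvc hVvbis.1 a⁻¹)).1
  have hTI : S.conv (Vv.indicator fun _ => (1:k))
      (S.conv f (Vv.indicator fun _ => a⁻¹)) ∈ I :=
    (hI.1.2.2.2 _ hg1I _ (S.indicator_const_mem_SteinSet hVvc hVvbis.1 1)).2
  have hTeq : S.conv (Vv.indicator fun _ => (1:k))
      (S.conv f (Vv.indicator fun _ => a⁻¹)) = Vv.indicator (fun _ => (1:k)) := by
    rw [S.conv_unit_indicator_right hVvunit f a⁻¹,
      S.conv_unit_indicator_left hVvunit _ 1]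
    funext x
    by_cases hrx : S.r x ∈ Vv
    · rw [Set.indicator_of_mem (show x ∈ S.r ⁻¹' Vv from hrx), one_mul]
      by_cases hdx : S.d x ∈ Vv
      · rw [Set.indicator_of_mem (show x ∈ S.d ⁻¹' Vv from hdx)]
        have hhx : h x = 0 := by
          by_contra hhx
          by_cases hxu : x ∈ S.unitSpace
          · have hxVv : x ∈ Vv := by rwa [S.unit_d hxu] at hdx
            exact hhx (hhB x (hVvB hxVv))
          · have hxK : x ∈ K := ⟨hhx, hxu⟩
            obtain ⟨B₁, hB₁L, hxB₁⟩ := mem_iUnion₂.1 (hLcov hxK)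
            exact hV'cond B₁ hB₁L x hxB₁ ⟨hVvsub hdx, hVvsub hrx⟩
        have hfx : f x = a * B.indicator (fun _ => (1:k)) x := by
          have h0 : f x - a * B.indicator (fun _ => (1:k)) x = 0 := hhx
          exact sub_eq_zero.1 h0
        by_cases hxB : x ∈ B
        · have hxVv : x ∈ Vv := by
            have hdxx : S.d x = x := S.unit_d (hBunit hxB)
            rwa [hdxx] at hdx
          rw [Set.indicator_of_mem hxVv, hfx, Set.indicator_of_mem hxB, mul_one,
            mul_inv_cancel₀ ha]
        · have hxVv : x ∉ Vv := fun hc => hxB (hVvB hc)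
          rw [Set.indicator_of_notMem hxVv, hfx, Set.indicator_of_notMem hxB,
            mul_zero, zero_mul]
      · rw [Set.indicator_of_notMem (show x ∉ S.d ⁻¹' Vv from hdx)]
        have hxVv : x ∉ Vv := fun hc => hdx (by rw [S.unit_d (hVvunit hc)]; exact hc)
        rw [Set.indicator_of_notMem hxVv]
    · rw [Set.indicator_of_notMem (show x ∉ S.r ⁻¹' Vv from hrx)]
      have hxVv : x ∉ Vv := fun hc => hrx (by rw [S.unit_r (hVvunit hc)]; exact hc)
      rw [Set.indicator_of_notMem hxVv]
  rw [hTeq] at hTI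
  -- translate from v back to u
  obtain ⟨δ, hδd, hδr⟩ := hvO
  have hγ0d : S.d (S.inv δ) = v := by rw [S.d_inv, hδr]
  have hγ0r : S.r (S.inv δ) = u := by rw [S.r_inv]; exact hδd
  obtain ⟨Bγ, hγBγ, -, hBγc, hBγbis⟩ := hAmple (S.inv δ) univ (mem_univ _) isOpen_univ
  set W' := S.r '' (Bγ ∩ S.d ⁻¹' Vv) with hW'def
  have hW'c : IsCompact W' := (hBγc.inter_right
    (hVvc.isClosed.preimage (S.continuous_d hTop))).image (S.continuous_r hTop)
  have hW'o : IsOpen W' := hBγbis.2.2.2.2 _ inter_subset_left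
    (hBγbis.1.inter (hVvbis.1.preimage (S.continuous_d hTop)))
  have hW'unit : W' ⊆ S.unitSpace := by
    rintro w ⟨b, -, rfl⟩; exact S.r_mem_unitSpace b
  have huW' : u ∈ W' :=
    ⟨S.inv δ, ⟨hγBγ, by rw [mem_preimage, hγ0d]; exact hvVv⟩, hγ0r⟩
  set Binv := S.inv '' Bγ with hBinvdef
  have hBinvStein : Binv.indicator (fun _ => (1:k)) ∈ S.SteinSet k :=
    S.indicator_const_mem_SteinSet (S.isCompact_inv_image hTop hBγc)
      (S.isOpen_inv_image hTop hBγbis.1) 1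
  have hg2I : S.conv (Vv.indicator fun _ => (1:k)) (Binv.indicator fun _ => (1:k)) ∈ I :=
    (hI.1.2.2.2 _ hTI _ hBinvStein).1
  have hT'I : S.conv (Bγ.indicator fun _ => (1:k))
      (S.conv (Vv.indicator fun _ => (1:k)) (Binv.indicator fun _ => (1:k))) ∈ I :=
    (hI.1.2.2.2 _ hg2I _ (S.indicator_const_mem_SteinSet hBγc hBγbis.1 1)).2
  have hT'eq : S.conv (Bγ.indicator fun _ => (1:k))
      (S.conv (Vv.indicator fun _ => (1:k)) (Binv.indicator fun _ => (1:k))) =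
      W'.indicator (fun _ => (1:k)) := by
    rw [S.conv_unit_indicator_left hVvunit _ 1, S.conv_indicator_left hBγbis.2.2.1 _ 1]
    funext x
    by_cases hrB : S.r x ∈ S.r '' Bγ
    · rw [Set.indicator_of_mem (show x ∈ S.r ⁻¹' (S.r '' Bγ) from hrB), one_mul]
      obtain ⟨hb0B, hb0r⟩ := S.secr_mem hrB
      set b0 := S.secr Bγ (S.r x) with hb0def
      set z := S.mul (S.inv b0) x with hzdef
      have hcomp : S.d (S.inv b0) = S.r x := by rw [S.d_inv, hb0r]
      have hrz : S.r z = S.d b0 := by rw [hzdef, S.r_mul_eq hcomp, S.r_inv]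
      have hxz : S.mul b0 z = x := by
        rw [hzdef]
        have h5 := S.inv_mul_cancel_left (x := S.inv b0) (y := x) hcomp
        rwa [S.inv_inv] at h5
      by_cases hrzVv : S.r z ∈ Vv
      · rw [Set.indicator_of_mem (show z ∈ S.r ⁻¹' Vv from hrzVv), one_mul]
        by_cases hzB : z ∈ Binv
        · obtain ⟨b1, hb1B, hb1z⟩ := hzB
          have hb1 : S.d b1 = S.d b0 := by rw [← S.r_inv b1, hb1z, hrz]
          have hb1b0 : b1 = b0 := hBγbis.2.1 hb1B hb0B hb1
          have hzinv : z = S.inv b0 := by rw [← hb1z, hb1b0]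
          have hxW' : x ∈ W' := by
            refine ⟨b0, ⟨hb0B, ?_⟩, ?_⟩
            · rw [mem_preimage, ← hrz]; exact hrzVv
            · rw [← hxz, hzinv]; rfl
          rw [Set.indicator_of_mem (show z ∈ Binv from ⟨b1, hb1B, hb1z⟩),
            Set.indicator_of_mem hxW']
        · have hxW' : x ∉ W' := by
            rintro ⟨b, ⟨hbB, hbd⟩, hbr⟩
            have hrb : S.r b = S.r x := by rw [← hbr, S.r_r]
            have hbb0 : b = b0 := by
              have h6 := S.secr_eq hBγbis.2.2.1 hbB
              rw [hrb] at h6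
              exact h6.symm
            apply hzB
            refine ⟨b0, hb0B, ?_⟩
            rw [hzdef, ← hbr, hbb0]
            exact (S.mul_unit (S.d_inv b0)).symm
          rw [Set.indicator_of_notMem hzB, Set.indicator_of_notMem hxW']
      · rw [Set.indicator_of_notMem (show z ∉ S.r ⁻¹' Vv from hrzVv)]
        have hxW' : x ∉ W' := by
          rintro ⟨b, ⟨hbB, hbd⟩, hbr⟩
          have hrb : S.r b = S.r x := by rw [← hbr, S.r_r]
          have hbb0 : b = b0 := by
            have h6 := S.secr_eq hBγbis.2.2.1 hbB
            rw [hrb] at h6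
            exact h6.symm
          apply hrzVv
          rw [hrz, ← hbb0]
          exact hbd
        rw [Set.indicator_of_notMem hxW']
    · rw [Set.indicator_of_notMem (show x ∉ S.r ⁻¹' (S.r '' Bγ) from hrB)]
      have hxW' : x ∉ W' := by
        rintro ⟨b, ⟨hbB, -⟩, hbr⟩
        exact hrB ⟨b, hbB, by rw [← hbr, S.r_r]⟩
      rw [Set.indicator_of_notMem hxW']
  rw [hT'eq] at hT'I
  exact ⟨W', hW'c, hW'o, hW'unit, huW', hT'I⟩

end Extraction

section Final

variable [TopologicalSpace G] [T2Space G]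

lemma idealOf_UOf_eq {Γ : Type*} [Group Γ] (hTop : S.IsTopological)
    (hAmple : S.IsAmple) (c : G → Γ) (hc_cont : ∀ γ : Γ, IsOpen (c ⁻¹' {γ}))
    (hc_mul : ∀ x y : G, S.d x = S.r y → c (S.mul x y) = c x * c y)
    (hSE : S.IsStronglyEffectiveOn (c ⁻¹' {1}))
    {k : Type*} [Field k] {I : Set (G → k)} (hI : S.IsGradedIdealOf c I) :
    S.idealOf k (S.UOf I) = I := by
  apply Set.Subset.antisymm
  · intro f hf
    refine Submodule.span_induction (p := fun f _ => f ∈ I) ?_ hI.1.2.1 ?_ ?_ hf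
    · rintro g ⟨B, hB, hBU, rfl⟩
      classical
      set K := S.d '' B with hKdef
      have hKc : IsCompact K := hB.1.image (S.continuous_d hTop)
      have hKU : K ⊆ S.UOf I := hBU
      -- for each point of K, a compact open unit set whose indicator lies in I
      have hex : ∀ u : K, ∃ V : Set G, IsCompact V ∧ IsOpen V ∧ V ⊆ S.unitSpace ∧
          u.1 ∈ V ∧ V.indicator (fun _ => (1 : k)) ∈ I := by
        intro u
        obtain ⟨huG, f0, hf0, hne0⟩ := hKU u.2
        exact S.exists_unit_indicator hTop hAmple c hc_cont hc_mul hSE hI huG hf0 hne0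
      set A : K → Set G := fun u => (hex u).choose with hAdef
      have hA : ∀ u : K, IsCompact (A u) ∧ IsOpen (A u) ∧ A u ⊆ S.unitSpace ∧
          u.1 ∈ A u ∧ (A u).indicator (fun _ => (1 : k)) ∈ I := fun u => (hex u).choose_spec
      obtain ⟨t, ht⟩ := hKc.elim_finite_subcover A (fun u => (hA u).2.1)
        (fun y hy => mem_iUnion.2 ⟨⟨y, hy⟩, (hA ⟨y, hy⟩).2.2.2.1⟩)
      have hunion := S.union_unit_indicator_mem hTop hAmple hI.1 (t.toList.map A) ?_
      swap
      · intro V hV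
        obtain ⟨u, -, rfl⟩ := List.mem_map.1 hV
        exact ⟨(hA u).1, (hA u).2.1, (hA u).2.2.1, (hA u).2.2.2.2⟩
      set W := ⋃ V ∈ t.toList.map A, V with hWdef
      have hKW : K ⊆ W := by
        intro y hy
        obtain ⟨u, hut, hyu⟩ := by
          have := ht hy
          rwa [mem_iUnion₂] at this
        exact mem_iUnion₂.2 ⟨A u, List.mem_map.2 ⟨u, Finset.mem_toList.2 hut, rfl⟩, hyu⟩
      have heq : S.conv (B.indicator fun _ => (1:k)) (W.indicator fun _ => (1:k)) =
          B.indicator (fun _ => (1:k)) := by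
        rw [S.conv_unit_indicator_right hunion.2.2.1 _ 1]
        funext x
        by_cases hxB : x ∈ B
        · have hdx : S.d x ∈ W := hKW ⟨x, hxB, rfl⟩
          rw [Set.indicator_of_mem (show x ∈ S.d ⁻¹' W from hdx), mul_one]
        · by_cases hdx : S.d x ∈ W
          · rw [Set.indicator_of_mem (show x ∈ S.d ⁻¹' W from hdx), mul_one]
          · rw [Set.indicator_of_notMem (show x ∉ S.d ⁻¹' W from hdx),
              Set.indicator_of_notMem hxB]
      rw [← heq]
      exact (hI.1.2.2.2 _ hunion.2.2.2 _
        (S.indicator_const_mem_SteinSet hB.1 hB.2.1 1)).2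
    · rintro g h - - hg hh
      exact S.ideal_add hI.1 hg hh
    · rintro a g - hg
      exact S.ideal_smul hTop hAmple hI.1 a hg
  · exact S.subset_idealOf_UOf hTop hAmple hI.1

lemma idealOf_mono {R : Type*} [CommRing R] {U V : Set G} (hUV : U ⊆ V) :
    S.idealOf R U ⊆ S.idealOf R V := by
  intro f hf
  refine Submodule.span_mono ?_ hf
  rintro g ⟨B, hB, hBU, rfl⟩
  exact ⟨B, hB, hBU.trans hUV, rfl⟩

end Final











end GroupoidStr

/-- `[CEP]`. Let `G` be a `Γ`-graded Hausdorff ample groupoid whose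
`ε`-component `G_ε = c⁻¹(ε)` is strongly effective, and `k` a field.  The
correspondence `U ↦ I(U)` is a lattice isomorphism from the lattice of open invariant
subsets of `G⁰` onto the lattice of graded ideals of `A_k(G)`. -/
theorem steinberg_graded_ideal_lattice {G : Type*} [TopologicalSpace G]
    (S : GroupoidStr G) [T2Space G] (hTop : S.IsTopological) (hAmple : S.IsAmple)
    {Γ : Type*} [Group Γ] (c : G → Γ)
    (hc_cont : ∀ γ : Γ, IsOpen (c ⁻¹' {γ}))
    (hc_mul : ∀ x y : G, S.d x = S.r y → c (S.mul x y) = c x * c y)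
    (hSE : S.IsStronglyEffectiveOn (c ⁻¹' {1}))
    (k : Type*) [Field k] :
    (∀ U : Set G, S.IsRelOpen U → S.IsInvariant U →
      S.IsGradedIdealOf c (S.idealOf k U)) ∧
    Set.BijOn (fun U : Set G => S.idealOf k U)
      {U : Set G | S.IsRelOpen U ∧ S.IsInvariant U}
      {I : Set (G → k) | S.IsGradedIdealOf c I} ∧
    (∀ U V : Set G, S.IsRelOpen U → S.IsInvariant U → S.IsRelOpen V → S.IsInvariant V →
      (U ⊆ V ↔ S.idealOf k U ⊆ S.idealOf k V)) := by
  have hgraded : ∀ U : Set G, S.IsRelOpen U → S.IsInvariant U →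
      S.IsGradedIdealOf c (S.idealOf k U) := fun U _ hinv =>
    S.idealOf_isGraded hTop hAmple hinv c hc_cont
  refine ⟨hgraded, ⟨?_, ?_, ?_⟩, ?_⟩
  · -- MapsTo
    intro U hU
    exact hgraded U hU.1 hU.2
  · -- InjOn
    intro U₁ h₁ U₂ h₂ heq
    have heq' : S.idealOf k U₁ = S.idealOf k U₂ := heq
    calc U₁ = S.UOf (S.idealOf k U₁) := S.recovery hTop hAmple h₁.1
      _ = S.UOf (S.idealOf k U₂) := by rw [heq']
      _ = U₂ := (S.recovery hTop hAmple h₂.1).symm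
  · -- SurjOn
    intro I hI
    refine ⟨S.UOf I, ⟨S.UOf_relOpen hI.1.1, S.UOf_invariant hTop hAmple hI.1⟩, ?_⟩
    exact S.idealOf_UOf_eq hTop hAmple c hc_cont hc_mul hSE hI
  · -- order isomorphism
    intro U V hUrel hUinv hVrel hVinv
    constructor
    · exact fun hUV => S.idealOf_mono hUV
    · intro hsub u hu
      obtain ⟨B, hB, huB, hBunit, hBU⟩ := S.exists_unit_bisection hTop hAmple hUrel hu
      have h1B : B.indicator (fun _ => (1:k)) ∈ S.idealOf k U :=
        Submodule.subset_span ⟨B, hB, hBU, rfl⟩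
      have h1BV := hsub h1B
      have := ((S.mem_idealOf_iff hAmple).1 h1BV).2 u
        (by rw [Set.indicator_of_mem huB]; exact one_ne_zero)
      rwa [S.unit_d (hBunit huB)] at this
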